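/- arXiv:1603.07500 — 6 statements merged into one kernel-verified Lean document; each statement's English description precedes it below -/
import Mathlib

section
/- Let P be a real 4×4 matrix of rank 3 defining a projection P_ã (so that ker P is one-dimensional and spanned by the projective eye point ã), and let C be a projective rational curve, properly parametrized by x̃(t), having at least one affine point. If C is not a straight line passing through ã, then the image P_ã(C) is a rational curve; equivalently, there do not exist a polynomial λ(t) and a fixed point α ∈ P³_ℂ such that P·x̃(t) = λ(t)·α for all t. -/
noncomputable section

open Polynomial Matrix

lemma ker_multiple (P : Matrix (Fin 4) (Fin 4) ℝ) (hrank : P.rank = 3)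
    (a : Fin 4 → ℝ) (ha : a ≠ 0) (haker : P.mulVec a = 0)
    (w : Fin 4 → ℝ) (hw : P.mulVec w = 0) : ∃ c : ℝ, c • a = w := by
  have hkdim : Module.finrank ℝ (LinearMap.ker P.mulVecLin) = 1 := by
    have h1 := LinearMap.finrank_range_add_finrank_ker P.mulVecLin
    have h2 : Module.finrank ℝ (LinearMap.range P.mulVecLin) = 3 := hrank
    have h3 : Module.finrank ℝ (Fin 4 → ℝ) = 4 := by simp
    omega
  have haker' : a ∈ LinearMap.ker P.mulVecLin := by
    simpa [Matrix.mulVecLin] using haker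
  have hw' : w ∈ LinearMap.ker P.mulVecLin := by
    simpa [Matrix.mulVecLin] using hw
  have hanz : (⟨a, haker'⟩ : LinearMap.ker P.mulVecLin) ≠ 0 := by
    simp only [ne_eq, Submodule.mk_eq_zero]; exact ha
  obtain ⟨c, hc⟩ := (finrank_eq_one_iff_of_nonzero' _ hanz).mp hkdim ⟨w, hw'⟩
  exact ⟨c, congrArg Subtype.val hc⟩

lemma kerC_multiple (P : Matrix (Fin 4) (Fin 4) ℝ) (hrank : P.rank = 3)
    (a : Fin 4 → ℝ) (ha : a ≠ 0) (haker : P.mulVec a = 0)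
    (v : Fin 4 → ℂ) (hv : (P.map (algebraMap ℝ ℂ)).mulVec v = 0) :
    ∃ c : ℂ, v = c • (fun i => ((a i : ℂ))) := by
  have hre : P.mulVec (fun j => (v j).re) = 0 := by
    funext i
    have := congrFun hv i
    simp only [Matrix.mulVec, dotProduct, Matrix.map_apply, Pi.zero_apply] at this ⊢
    have := congrArg Complex.re this
    simpa [Complex.re_sum] using this
  have him : P.mulVec (fun j => (v j).im) = 0 := by
    funext i
    have := congrFun hv i
    simp only [Matrix.mulVec, dotProduct, Matrix.map_apply, Pi.zero_apply] at this ⊢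
    have := congrArg Complex.im this
    simpa [Complex.im_sum] using this
  obtain ⟨c, hc⟩ := ker_multiple P hrank a ha haker _ hre
  obtain ⟨d, hd⟩ := ker_multiple P hrank a ha haker _ him
  refine ⟨(c : ℂ) + d * Complex.I, ?_⟩
  funext j
  have hcj := congrFun hc j
  have hdj := congrFun hd j
  simp only [Pi.smul_apply, smul_eq_mul] at hcj hdj ⊢
  rw [show v j = ((v j).re : ℂ) + (v j).im * Complex.I from (Complex.re_add_im (v j)).symm,
    ← hcj, ← hdj]
  push_cast
  ring

/-- Let `P` be a real 4×4 matrix of rank 3 defining a projection,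
with kernel spanned by the projective eye point `a`, and let `C` be a projective
rational curve, properly parametrized by the homogeneous polynomial parametrization
`X(t) = [X₀(t):X₁(t):X₂(t):X₃(t)]`, having at least one affine point.  If `C` is not a
straight line passing through `[a]`, then the image of `C` under the projection is a
rational curve; equivalently, there do not exist a polynomial `λ(t)` and a fixed point
`α ∈ ℙ³_ℂ` such that `P·X(t) = λ(t)·α` for all `t`. -/
theorem statement_0
    (P : Matrix (Fin 4) (Fin 4) ℝ) (hrank : P.rank = 3)
    (a : Fin 4 → ℝ) (ha : a ≠ 0) (haker : P.mulVec a = 0)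
    (X : Fin 4 → Polynomial ℂ)
    -- the parametrization is proper: injective (as a map to ℙ³_ℂ) for all but
    -- finitely many parameter values
    (hproper : {t : ℂ | (fun i => (X i).eval t) ≠ 0 ∧ ∃ t', t' ≠ t ∧
        (fun i => (X i).eval t') ≠ 0 ∧ ∃ lam : ℂ, lam ≠ 0 ∧
          (fun i => (X i).eval t') = lam • (fun i => (X i).eval t)}.Finite)
    -- the curve has at least one affine point
    (haff : ∃ t : ℂ, (X 3).eval t ≠ 0)
    -- the curve is not a straight (projective) line going through the eye point `[a]`
    (hline : ¬ ∃ b : Fin 4 → ℂ, ∀ t : ℂ,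
        (fun i => (X i).eval t) ∈ Submodule.span ℂ {(fun i => ((a i : ℂ))), b}) :
    ¬ ∃ (lam : Polynomial ℂ) (α : Fin 4 → ℂ), α ≠ 0 ∧
      ∀ t : ℂ, (P.map (algebraMap ℝ ℂ)).mulVec (fun i => (X i).eval t) =
        lam.eval t • α := by
  rintro ⟨lam, α, hα, h⟩
  set Pc := P.map (algebraMap ℝ ℂ) with hPc
  set ac : Fin 4 → ℂ := fun i => ((a i : ℂ)) with hac
  by_cases hl : lam = 0
  · -- all images are zero, so X(t) lies in the kernel, i.e. span of a
    apply hline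
    refine ⟨0, fun t => ?_⟩
    have h0 : Pc.mulVec (fun i => (X i).eval t) = 0 := by
      rw [h t, hl]; simp
    obtain ⟨c, hc⟩ := kerC_multiple P hrank a ha haker _ h0
    rw [hc]
    exact Submodule.smul_mem _ c (Submodule.subset_span (by simp [hac]))
  · -- pick t₀ with lam(t₀) ≠ 0
    have : ¬ ∀ t : ℂ, lam.eval t = 0 := fun hall => hl (lam.zero_of_eval_zero hall)
    push_neg at this
    obtain ⟨t₀, ht₀⟩ := this
    set v : Fin 4 → ℂ := (lam.eval t₀)⁻¹ • (fun i => (X i).eval t₀) with hv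
    have hPv : Pc.mulVec v = α := by
      rw [hv, Matrix.mulVec_smul, h t₀, smul_smul, inv_mul_cancel₀ ht₀, one_smul]
    apply hline
    refine ⟨v, fun t => ?_⟩
    have hker : Pc.mulVec ((fun i => (X i).eval t) - lam.eval t • v) = 0 := by
      rw [Matrix.mulVec_sub, Matrix.mulVec_smul, h t, hPv, sub_self]
    obtain ⟨c, hc⟩ := kerC_multiple P hrank a ha haker _ hker
    have : (fun i => (X i).eval t) = c • ac + lam.eval t • v :=
      sub_eq_iff_eq_add.mp hc
    rw [this]
    exact Submodule.add_mem _
      (Submodule.smul_mem _ _ (Submodule.subset_span (by simp)))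
      (Submodule.smul_mem _ _ (Submodule.subset_span (by simp)))

end
end

section
/- Let C2 = P_ã(C1) with ã = [ã1:ã2:ã3:ã4], and let ψ(t) be the rational function associated with P_ã. Then there exists a rational function λ(t) such that for each t, the values s = ψ(t) and λ = λ(t) satisfy the system: x2(s) − x1(t) = λ·(ã4·x1(t) − ã1), y2(s) − y1(t) = λ·(ã4·y1(t) − ã2), z2(s) − z1(t) = λ·(ã4·z1(t) − ã3). -/
noncomputable section

open Polynomial Filter Matrix

/-- Evaluation of a real rational function at a real point (junk value at poles). -/
def RFeval (f : RatFunc ℝ) (t : ℝ) : ℝ := f.num.eval t / f.denom.eval t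

/-- Evaluation of a real rational function at a complex point (junk value at poles). -/
def RFevalC (f : RatFunc ℝ) (t : ℂ) : ℂ :=
  ((f.num.map (algebraMap ℝ ℂ)).eval t) / ((f.denom.map (algebraMap ℝ ℂ)).eval t)

/-- The derivative of a rational function. -/
def RFderiv (f : RatFunc ℝ) : RatFunc ℝ :=
  (algebraMap (Polynomial ℝ) (RatFunc ℝ) (derivative f.num) *
      algebraMap (Polynomial ℝ) (RatFunc ℝ) f.denom -
    algebraMap (Polynomial ℝ) (RatFunc ℝ) f.num *
      algebraMap (Polynomial ℝ) (RatFunc ℝ) (derivative f.denom)) /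
  algebraMap (Polynomial ℝ) (RatFunc ℝ) (f.denom ^ 2)

/-- The real domain of definition of a rational space parametrization. -/
def DomR (x : Fin 3 → RatFunc ℝ) (t : ℝ) : Prop := ∀ i, (x i).denom.eval t ≠ 0

/-- The complex domain of definition of a rational space parametrization. -/
def DomC (x : Fin 3 → RatFunc ℝ) (t : ℂ) : Prop :=
  ∀ i, ((x i).denom.map (algebraMap ℝ ℂ)).eval t ≠ 0

/-- The affine point of the curve corresponding to the (real) parameter value `t`. -/
def evalAff (x : Fin 3 → RatFunc ℝ) (t : ℝ) : Fin 3 → ℝ := fun i => RFeval (x i) t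

/-- The affine point of the curve corresponding to the (complex) parameter value `t`. -/
def evalAffC (x : Fin 3 → RatFunc ℝ) (t : ℂ) : Fin 3 → ℂ := fun i => RFevalC (x i) t

/-- Properness of a parametrization: it is injective for all but finitely many
(complex) parameter values. -/
def ProperParam (x : Fin 3 → RatFunc ℝ) : Prop :=
  {t : ℂ | DomC x t ∧ ∃ t', t' ≠ t ∧ DomC x t' ∧ evalAffC x t' = evalAffC x t}.Finite

/-- The curve is a straight line. -/
def IsLineParam (x : Fin 3 → RatFunc ℝ) : Prop :=
  ∃ p v : Fin 3 → ℝ, v ≠ 0 ∧ ∀ t : ℝ, DomR x t → ∃ μ : ℝ, evalAff x t = p + μ • v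

/-- The curve lies in the plane with coefficient vector `n = (A,B,C,D)`,
of equation `Ax + By + Cz + D = 0`. -/
def InPlane (x : Fin 3 → RatFunc ℝ) (n : Fin 4 → ℝ) : Prop :=
  ∀ t : ℝ, DomR x t → (∑ i : Fin 3, n i.castSucc * RFeval (x i) t) + n 3 = 0

/-- The normal vector of the plane `Ax + By + Cz + D = 0` is nonzero. -/
def PlaneNormalNZ (n : Fin 4 → ℝ) : Prop := ¬ (n 0 = 0 ∧ n 1 = 0 ∧ n 2 = 0)

/-- Complexification of a real vector. -/
def cmap4 (v : Fin 4 → ℝ) : Fin 4 → ℂ := fun i => (v i : ℂ)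

/-- Homogeneous form of the projection onto the plane `n` from the eye point `a`:
`p ↦ ⟨n,p⟩ a − ⟨n,a⟩ p`. -/
def projHC (n a p : Fin 4 → ℂ) : Fin 4 → ℂ :=
  (∑ i, n i * p i) • a - (∑ i, n i * a i) • p

/-- Complex homogeneous coordinates of the affine point `x(t)`. -/
def homC (x : Fin 3 → RatFunc ℝ) (t : ℂ) : Fin 4 → ℂ :=
  Fin.snoc (evalAffC x t) 1

/-- The affine form of the projection, acting on affine (complex) points. -/
def projAffC (n a : Fin 4 → ℝ) (p : Fin 3 → ℂ) : Fin 3 → ℂ :=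
  fun i => projHC (cmap4 n) (cmap4 a) (Fin.snoc p 1) i.castSucc /
    projHC (cmap4 n) (cmap4 a) (Fin.snoc p 1) 3

/-- The parameter values `t`, `s` are related by the projection from the eye point `a`
onto the plane `n`: the projection maps `x1(t)` to `x2(s)`. -/
def RelatedByProj (n a : Fin 4 → ℝ) (x1 x2 : Fin 3 → RatFunc ℝ) (t s : ℂ) : Prop :=
  DomC x1 t ∧ DomC x2 s ∧
    ∃ lam : ℂ, lam ≠ 0 ∧ projHC (cmap4 n) (cmap4 a) (homC x1 t) = lam • homC x2 s

/-- `C2` (parametrized by `x2`) is the projection of `C1` (parametrized by `x1`)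
from the eye point `a` onto the plane `n`: every point of `C2` (up to finitely many)
is the projection of some point of `C1`.  The eye point is a nonzero vector of `ℝ⁴`
(projective coordinates) not lying on the plane. -/
def IsProjectionOf (n a : Fin 4 → ℝ) (x1 x2 : Fin 3 → RatFunc ℝ) : Prop :=
  a ≠ 0 ∧ (∑ i, n i * a i) ≠ 0 ∧
    ∀ᶠ s : ℂ in cofinite, ∃ t : ℂ, RelatedByProj n a x1 x2 t s

/-- The projection, restricted to `C1`, is injective for almost all points of `C2`. -/
def NonDegenerateProj (n a : Fin 4 → ℝ) (x1 x2 : Fin 3 → RatFunc ℝ) : Prop :=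
  ∀ᶠ s : ℂ in cofinite, ∃! t : ℂ, RelatedByProj n a x1 x2 t s

/-- `ψ` is associated with the projection:  `P_ã ∘ x1 = x2 ∘ ψ`. -/
def AssociatedRF (n a : Fin 4 → ℝ) (x1 x2 : Fin 3 → RatFunc ℝ) (ψ : RatFunc ℝ) : Prop :=
  ∀ᶠ t : ℂ in cofinite, RelatedByProj n a x1 x2 t (RFevalC ψ t)

/-- `N(t,s)·(x1(t) − x2(s)) = det(x1(t) − x2(s), x1'(t), x2'(s))`,
where `N(t,s) = x1'(t) × x2'(s)`, evaluated at the complex pair `(t,s)`. -/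
def NdotC (x1 x2 : Fin 3 → RatFunc ℝ) (t s : ℂ) : ℂ :=
  dotProduct
    (crossProduct (fun i => RFevalC (RFderiv (x1 i)) t) (fun i => RFevalC (RFderiv (x2 i)) s))
    (fun i => RFevalC (x1 i) t - RFevalC (x2 i) s)

/-- Evaluation of a bivariate real polynomial at a complex point `(t,s)`. -/
def aeval2 (t s : ℂ) (F : MvPolynomial (Fin 2) ℝ) : ℂ := MvPolynomial.aeval ![t, s] F

/-- `Ncal` is (a representative of) the square-free part of the numerator of the
bivariate rational function `N(t,s)·(x1(t) − x2(s))`: it is square-free and has the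
same zero set. -/
def IsNcal (x1 x2 : Fin 3 → RatFunc ℝ) (Ncal : MvPolynomial (Fin 2) ℝ) : Prop :=
  Squarefree Ncal ∧
    ∀ t s : ℂ, DomC x1 t → DomC x2 s → (aeval2 t s Ncal = 0 ↔ NdotC x1 x2 t s = 0)

/-- The polynomial `G(t,s) = p(t) − s·q(t)` associated with `ψ = p/q`;
variable `0` is `t` and variable `1` is `s`. -/
def assocPoly (ψ : RatFunc ℝ) : MvPolynomial (Fin 2) ℝ :=
  Polynomial.aeval (MvPolynomial.X 0) ψ.num -
    MvPolynomial.X 1 * Polynomial.aeval (MvPolynomial.X 0) ψ.denom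

/-- `(t,s)` is a singular point of the plane curve `𝒩* : Ncal = 0`. -/
def SingPt (Ncal : MvPolynomial (Fin 2) ℝ) (t s : ℂ) : Prop :=
  aeval2 t s Ncal = 0 ∧ aeval2 t s (MvPolynomial.pderiv 0 Ncal) = 0 ∧
    aeval2 t s (MvPolynomial.pderiv 1 Ncal) = 0

/-- `p` is the limit point `P^∞ = lim_{t→∞} x(t)` of the parametrization `x`. -/
def IsLimitPoint (x : Fin 3 → RatFunc ℝ) (p : Fin 3 → ℂ) : Prop :=
  Filter.Tendsto (evalAffC x) (Filter.cocompact ℂ) (nhds p)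

/-- `q` is a self-intersection of the curve parametrized by `x`. -/
def SelfIntersection (x : Fin 3 → RatFunc ℝ) (q : Fin 3 → ℂ) : Prop :=
  ∃ s1 s2 : ℂ, s1 ≠ s2 ∧ DomC x s1 ∧ DomC x s2 ∧ evalAffC x s1 = q ∧ evalAffC x s2 = q

/-- The pair `(x1(t0), x2(s0))` is lucky. -/
def LuckyPair (x1 x2 : Fin 3 → RatFunc ℝ) (Ncal : MvPolynomial (Fin 2) ℝ)
    (t0 s0 : ℂ) : Prop :=
  evalAffC x1 t0 ≠ evalAffC x2 s0 ∧
  ¬ IsLimitPoint x1 (evalAffC x1 t0) ∧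
  ¬ IsLimitPoint x2 (evalAffC x2 s0) ∧
  ¬ SelfIntersection x2 (evalAffC x2 s0) ∧
  ¬ ∃ s' : ℂ, SingPt Ncal t0 s'


def compN (P p q : ℝ[X]) : ℝ[X] :=
  ∑ k ∈ Finset.range (P.natDegree + 1), Polynomial.C (P.coeff k) * p ^ k * q ^ (P.natDegree - k)

lemma compN_eval {K : Type*} [Field K] (f : ℝ →+* K) (P p q : ℝ[X]) (t : K)
    (hq : Polynomial.eval₂ f t q ≠ 0) :
    Polynomial.eval₂ f t (compN P p q) =
      (Polynomial.eval₂ f t q) ^ P.natDegree *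
        (P.map f).eval (Polynomial.eval₂ f t p / Polynomial.eval₂ f t q) := by
  set d := P.natDegree with hd
  set pt := Polynomial.eval₂ f t p
  set qt := Polynomial.eval₂ f t q
  rw [compN, Polynomial.eval₂_finset_sum]
  rw [Polynomial.eval_eq_sum_range' (lt_of_le_of_lt (Polynomial.natDegree_map_le)
    (Nat.lt_succ_of_le (le_of_eq hd.symm)))]
  rw [Finset.mul_sum]
  apply Finset.sum_congr rfl
  intro k hk
  have hk' : k ≤ d := Nat.lt_succ_iff.mp (Finset.mem_range.mp hk)
  have hqq : qt ^ (d - k) * qt ^ k = qt ^ d := by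
    rw [← pow_add, Nat.sub_add_cancel hk']
  rw [Polynomial.eval₂_mul, Polynomial.eval₂_mul, Polynomial.eval₂_C, Polynomial.eval₂_pow,
    Polynomial.eval₂_pow, Polynomial.coeff_map, div_pow]
  field_simp
  linear_combination (f (P.coeff k) * pt ^ k) * hqq

def LnumP (x1 : Fin 3 → RatFunc ℝ) (n : Fin 4 → ℝ) : ℝ[X] :=
  Polynomial.C (n 0) * (x1 0).num * (x1 1).denom * (x1 2).denom +
  Polynomial.C (n 1) * (x1 0).denom * (x1 1).num * (x1 2).denom +
  Polynomial.C (n 2) * (x1 0).denom * (x1 1).denom * (x1 2).num +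
  Polynomial.C (n 3) * ((x1 0).denom * (x1 1).denom * (x1 2).denom)

def QP (x1 : Fin 3 → RatFunc ℝ) : ℝ[X] := (x1 0).denom * (x1 1).denom * (x1 2).denom

def DlamP (x1 : Fin 3 → RatFunc ℝ) (n a : Fin 4 → ℝ) : ℝ[X] :=
  Polynomial.C (∑ i, n i * a i) * QP x1 - Polynomial.C (a 3) * LnumP x1 n

lemma key_facts (x1 x2 : Fin 3 → RatFunc ℝ) (n a : Fin 4 → ℝ) (t σ : ℂ)
    (hdom : DomC x1 t) (lam_c : ℂ) (hlamne : lam_c ≠ 0)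
    (hrel : projHC (cmap4 n) (cmap4 a) (homC x1 t) = lam_c • homC x2 σ) :
    ∃ S : ℂ,
      Polynomial.eval₂ (algebraMap ℝ ℂ) t (LnumP x1 n) =
        Polynomial.eval₂ (algebraMap ℝ ℂ) t (QP x1) * S ∧
      Polynomial.eval₂ (algebraMap ℝ ℂ) t (DlamP x1 n a) =
        Polynomial.eval₂ (algebraMap ℝ ℂ) t (QP x1) * (((∑ i, n i * a i : ℝ) : ℂ) - (a 3 : ℂ) * S) ∧
      Polynomial.eval₂ (algebraMap ℝ ℂ) t (QP x1) ≠ 0 ∧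
      (((∑ i, n i * a i : ℝ) : ℂ) - (a 3 : ℂ) * S) ≠ 0 ∧
      ∀ i : Fin 3,
        (((∑ i, n i * a i : ℝ) : ℂ) - (a 3 : ℂ) * S) * (RFevalC (x2 i) σ - RFevalC (x1 i) t)
          = S * ((a 3 : ℂ) * RFevalC (x1 i) t - (a i.castSucc : ℂ)) := by
  set f := algebraMap ℝ ℂ
  set S := ∑ i : Fin 4, cmap4 n i * homC x1 t i with hS
  set Na : ℝ := ∑ i, n i * a i with hNa
  have hNaC : (∑ i : Fin 4, cmap4 n i * cmap4 a i) = ((Na : ℝ) : ℂ) := by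
    simp [cmap4, hNa]
  have hlast : ((3 : Fin 4)) = Fin.last 3 := rfl
  -- evaluation of coordinates
  have hq1 : ∀ j : Fin 3, Polynomial.eval₂ f t (x1 j).denom ≠ 0 := by
    intro j; rw [← Polynomial.eval_map]; exact hdom j
  have hx1eval : ∀ j : Fin 3, RFevalC (x1 j) t =
      Polynomial.eval₂ f t (x1 j).num / Polynomial.eval₂ f t (x1 j).denom := by
    intro j; rw [RFevalC, Polynomial.eval_map, Polynomial.eval_map]
  -- the equation at coordinate 3
  have h3 : S * (a 3 : ℂ) - (Na : ℂ) = lam_c := by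
    have := congrFun hrel 3
    simp only [projHC, Pi.sub_apply, Pi.smul_apply, smul_eq_mul, hNaC] at this
    rw [hlast] at this
    simp only [homC, Fin.snoc_last, mul_one] at this
    rw [hS]
    simpa [cmap4, homC] using this
  -- the equations at coordinates i
  have hi : ∀ i : Fin 3, S * (a i.castSucc : ℂ) - (Na : ℂ) * RFevalC (x1 i) t
      = lam_c * RFevalC (x2 i) σ := by
    intro i
    have := congrFun hrel i.castSucc
    simp only [projHC, Pi.sub_apply, Pi.smul_apply, smul_eq_mul, hNaC] at this
    simp only [homC, Fin.snoc_castSucc] at this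
    rw [hS]
    simpa [cmap4, homC, evalAffC] using this
  -- expansion of S
  have hSexp : S = (n 0 : ℂ) * RFevalC (x1 0) t + (n 1 : ℂ) * RFevalC (x1 1) t
      + (n 2 : ℂ) * RFevalC (x1 2) t + (n 3 : ℂ) := by
    rw [hS, Fin.sum_univ_four]
    simp only [homC, cmap4, show (0:Fin 4) = Fin.castSucc 0 from rfl,
      show (1:Fin 4) = Fin.castSucc 1 from rfl, show (2:Fin 4) = Fin.castSucc 2 from rfl,
      hlast, Fin.snoc_castSucc, Fin.snoc_last, evalAffC, mul_one]
  have hcne : ((Na : ℝ) : ℂ) - (a 3 : ℂ) * S ≠ 0 := by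
    intro h; apply hlamne
    linear_combination -h3 - h
  have hNaC' : (∑ x : Fin 4, ((n x : ℝ) : ℂ) * ((a x : ℝ) : ℂ)) = ((Na : ℝ) : ℂ) := by
    rw [← hNaC]; rfl
  have hfc : ∀ r : ℝ, f r = (r : ℂ) := fun r => rfl
  refine ⟨S, ?_, ?_, ?_, hcne, ?_⟩
  · simp only [LnumP, QP, Polynomial.eval₂_add, Polynomial.eval₂_mul, Polynomial.eval₂_C]
    rw [hSexp, hx1eval 0, hx1eval 1, hx1eval 2]
    field_simp [hq1 0, hq1 1, hq1 2]
    simp only [hfc]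
    ring
  · simp only [DlamP, LnumP, QP, Polynomial.eval₂_sub, Polynomial.eval₂_add,
      Polynomial.eval₂_mul, Polynomial.eval₂_C, hfc, hNaC']
    rw [hSexp, hx1eval 0, hx1eval 1, hx1eval 2]
    field_simp [hq1 0, hq1 1, hq1 2]
    ring
  · simp only [QP, Polynomial.eval₂_mul]
    exact mul_ne_zero (mul_ne_zero (hq1 0) (hq1 1)) (hq1 2)
  · intro i
    have h1 := hi i
    linear_combination h1 - RFevalC (x2 i) σ * h3

/-- Let `C2 = P_ã(C1)` with `ã = [ã1:ã2:ã3:ã4]`, and let `ψ` be the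
rational function associated with `P_ã`.  Then there is a rational function `λ(t)` such
that for each `t`, the values `s = ψ(t)` and `λ = λ(t)` satisfy the system
`x2(s) − x1(t) = λ·(ã4·x1(t) − ã1)`, `y2(s) − y1(t) = λ·(ã4·y1(t) − ã2)`,
`z2(s) − z1(t) = λ·(ã4·z1(t) − ã3)`. -/
theorem statement_2 (x1 x2 : Fin 3 → RatFunc ℝ) (n a : Fin 4 → ℝ) (ψ : RatFunc ℝ)
    (hx1 : ProperParam x1) (hx2 : ProperParam x2)
    (hnl1 : ¬ IsLineParam x1) (hnl2 : ¬ IsLineParam x2)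
    (hn : PlaneNormalNZ n) (hplane : InPlane x2 n)
    (hsame : ¬ ∃ m : Fin 4 → ℝ, PlaneNormalNZ m ∧ InPlane x1 m ∧ InPlane x2 m)
    (hproj : IsProjectionOf n a x1 x2)
    (hψ : AssociatedRF n a x1 x2 ψ) :
    ∃ lam : RatFunc ℝ, ∀ t : ℝ,
      DomR x1 t → ψ.denom.eval t ≠ 0 → DomR x2 (RFeval ψ t) → lam.denom.eval t ≠ 0 →
      ∀ i : Fin 3,
        RFeval (x2 i) (RFeval ψ t) - RFeval (x1 i) t =
          RFeval lam t * (a 3 * RFeval (x1 i) t - a i.castSucc) := by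
  classical
  -- Step 0 : DlamP is a nonzero polynomial
  obtain ⟨t0, hd10, hd20, lam0, hl0, hrel0⟩ := hψ.exists
  obtain ⟨S0, -, hDl0, hQ0, hc0, -⟩ := key_facts x1 x2 n a t0 _ hd10 lam0 hl0 hrel0
  have hDlam_ne : DlamP x1 n a ≠ 0 := by
    intro h
    rw [h, Polynomial.eval₂_zero] at hDl0
    exact (mul_ne_zero hQ0 hc0) hDl0.symm
  set lam : RatFunc ℝ :=
    algebraMap (Polynomial ℝ) (RatFunc ℝ) (LnumP x1 n) /
      algebraMap (Polynomial ℝ) (RatFunc ℝ) (DlamP x1 n a) with hlamdef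
  have halgD : algebraMap (Polynomial ℝ) (RatFunc ℝ) (DlamP x1 n a) ≠ 0 :=
    RatFunc.algebraMap_ne_zero hDlam_ne
  have hdenne : algebraMap (Polynomial ℝ) (RatFunc ℝ) lam.denom ≠ 0 :=
    RatFunc.algebraMap_ne_zero (RatFunc.denom_ne_zero lam)
  have hcross : LnumP x1 n * lam.denom = lam.num * DlamP x1 n a := by
    apply RatFunc.algebraMap_injective ℝ
    have h1 : algebraMap (Polynomial ℝ) (RatFunc ℝ) (LnumP x1 n) /
        algebraMap (Polynomial ℝ) (RatFunc ℝ) (DlamP x1 n a) =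
        algebraMap (Polynomial ℝ) (RatFunc ℝ) lam.num /
          algebraMap (Polynomial ℝ) (RatFunc ℝ) lam.denom := by
      rw [RatFunc.num_div_denom]
    rw [div_eq_div_iff halgD hdenne] at h1
    simpa only [_root_.map_mul] using h1
  refine ⟨lam, ?_⟩
  intro t hdr1 hqψt hdr2 hQlt i
  -- the master polynomial
  set G : Polynomial ℝ :=
    (compN (x2 i).num ψ.num ψ.denom * ψ.denom ^ (x2 i).denom.natDegree * (x1 i).denom -
        (x1 i).num * compN (x2 i).denom ψ.num ψ.denom * ψ.denom ^ (x2 i).num.natDegree) *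
        lam.denom -
      lam.num * (compN (x2 i).denom ψ.num ψ.denom * ψ.denom ^ (x2 i).num.natDegree) *
        (Polynomial.C (a 3) * (x1 i).num - Polynomial.C (a i.castSucc) * (x1 i).denom)
    with hGdef
  have hGzero : G = 0 := by
    have hmapinj : Function.Injective (Polynomial.map (algebraMap ℝ ℂ)) :=
      Polynomial.map_injective _ (algebraMap ℝ ℂ).injective
    apply hmapinj
    rw [Polynomial.map_zero]
    apply Polynomial.eq_zero_of_infinite_isRoot
    have hfin : ({τ : ℂ | ¬ RelatedByProj n a x1 x2 τ (RFevalC ψ τ)} ∪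
        {τ : ℂ | (ψ.denom.map (algebraMap ℝ ℂ)).eval τ = 0}).Finite :=
      Set.Finite.union (Filter.eventually_cofinite.mp hψ)
        (Polynomial.finite_setOf_isRoot
          ((Polynomial.map_ne_zero_iff (algebraMap ℝ ℂ).injective).mpr
            (RatFunc.denom_ne_zero ψ)))
    apply Set.Infinite.mono _ hfin.infinite_compl
    intro τ hτ
    simp only [Set.compl_union, Set.mem_inter_iff, Set.mem_compl_iff, Set.mem_setOf_eq,
      not_not] at hτ
    obtain ⟨hrelτ, hqψτ⟩ := hτ
    obtain ⟨hd1, hd2, lc, hlc, hrel⟩ := hrelτ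
    obtain ⟨S, hLn, hDl, hQne, hcne, hkey⟩ := key_facts x1 x2 n a τ _ hd1 lc hlc hrel
    set NaC : ℂ := ((∑ j, n j * a j : ℝ) : ℂ) with hNaCdef
    have hW : Polynomial.eval₂ (algebraMap ℝ ℂ) τ ψ.denom ≠ 0 := by
      rw [← Polynomial.eval_map]; exact hqψτ
    show Polynomial.IsRoot _ τ
    rw [Polynomial.IsRoot, Polynomial.eval_map]
    set σ := RFevalC ψ τ with hσdef
    have hσ : σ = Polynomial.eval₂ (algebraMap ℝ ℂ) τ ψ.num /
        Polynomial.eval₂ (algebraMap ℝ ℂ) τ ψ.denom := by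
      rw [hσdef, RFevalC, Polynomial.eval_map, Polynomial.eval_map]
    have hA := compN_eval (algebraMap ℝ ℂ) (x2 i).num ψ.num ψ.denom τ hW
    have hB := compN_eval (algebraMap ℝ ℂ) (x2 i).denom ψ.num ψ.denom τ hW
    rw [← hσ] at hA hB
    have hq2σ : ((x2 i).denom.map (algebraMap ℝ ℂ)).eval σ ≠ 0 := hd2 i
    have hQ1 : Polynomial.eval₂ (algebraMap ℝ ℂ) τ (x1 i).denom ≠ 0 := by
      rw [← Polynomial.eval_map]; exact hd1 i
    have hX2 : RFevalC (x2 i) σ =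
        ((x2 i).num.map (algebraMap ℝ ℂ)).eval σ /
          ((x2 i).denom.map (algebraMap ℝ ℂ)).eval σ := rfl
    have hX1 : RFevalC (x1 i) τ =
        Polynomial.eval₂ (algebraMap ℝ ℂ) τ (x1 i).num /
          Polynomial.eval₂ (algebraMap ℝ ℂ) τ (x1 i).denom := by
      rw [RFevalC, Polynomial.eval_map, Polynomial.eval_map]
    simp only [Polynomial.eval_map_algebraMap] at hA hB hX2
    have hq2σ' : Polynomial.aeval σ ((x2 i).denom) ≠ 0 := by
      have h0 := hd2 i
      rwa [Polynomial.eval_map_algebraMap] at h0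
    have hk := hkey i
    rw [hX1, hX2] at hk
    have hkeyC : (NaC - (a 3 : ℂ) * S) *
        (Polynomial.aeval σ ((x2 i).num) *
            Polynomial.eval₂ (algebraMap ℝ ℂ) τ (x1 i).denom -
          Polynomial.eval₂ (algebraMap ℝ ℂ) τ (x1 i).num *
            Polynomial.aeval σ ((x2 i).denom))
        = S * ((a 3 : ℂ) * Polynomial.eval₂ (algebraMap ℝ ℂ) τ (x1 i).num -
            (a i.castSucc : ℂ) * Polynomial.eval₂ (algebraMap ℝ ℂ) τ (x1 i).denom) *
            Polynomial.aeval σ ((x2 i).denom) := by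
      field_simp [hq2σ'] at hk
      linear_combination hk
    have hcrossE : Polynomial.eval₂ (algebraMap ℝ ℂ) τ (LnumP x1 n) *
          Polynomial.eval₂ (algebraMap ℝ ℂ) τ lam.denom =
        Polynomial.eval₂ (algebraMap ℝ ℂ) τ lam.num *
          Polynomial.eval₂ (algebraMap ℝ ℂ) τ (DlamP x1 n a) := by
      have h2 := congrArg (Polynomial.eval₂ (algebraMap ℝ ℂ) τ) hcross
      simpa only [Polynomial.eval₂_mul] using h2
    have hDτ : Polynomial.eval₂ (algebraMap ℝ ℂ) τ (DlamP x1 n a) ≠ 0 := by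
      rw [hDl]; exact mul_ne_zero hQne hcne
    have hPD : Polynomial.eval₂ (algebraMap ℝ ℂ) τ lam.num *
        (Polynomial.eval₂ (algebraMap ℝ ℂ) τ (QP x1) * (NaC - (a 3 : ℂ) * S)) =
        Polynomial.eval₂ (algebraMap ℝ ℂ) τ (QP x1) * S *
          Polynomial.eval₂ (algebraMap ℝ ℂ) τ lam.denom := by
      linear_combination (-(Polynomial.eval₂ (algebraMap ℝ ℂ) τ lam.num)) * hDl - hcrossE +
        (Polynomial.eval₂ (algebraMap ℝ ℂ) τ lam.denom) * hLn
    have hfc : ∀ r : ℝ, algebraMap ℝ ℂ r = (r : ℂ) := fun r => rfl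
    have hGeval : Polynomial.eval₂ (algebraMap ℝ ℂ) τ (DlamP x1 n a) *
        Polynomial.eval₂ (algebraMap ℝ ℂ) τ G = 0 := by
      simp only [hGdef, Polynomial.eval₂_sub, Polynomial.eval₂_mul, Polynomial.eval₂_pow,
        Polynomial.eval₂_C, hA, hB, hfc]
      rw [hDl]
      linear_combination
        ((Polynomial.eval₂ (algebraMap ℝ ℂ) τ ψ.denom) ^ ((x2 i).num.natDegree) *
          (Polynomial.eval₂ (algebraMap ℝ ℂ) τ ψ.denom) ^ ((x2 i).denom.natDegree) *
          Polynomial.eval₂ (algebraMap ℝ ℂ) τ lam.denom *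
          Polynomial.eval₂ (algebraMap ℝ ℂ) τ (QP x1)) * hkeyC +
        (-((Polynomial.eval₂ (algebraMap ℝ ℂ) τ ψ.denom) ^ ((x2 i).num.natDegree) *
          (Polynomial.eval₂ (algebraMap ℝ ℂ) τ ψ.denom) ^ ((x2 i).denom.natDegree) *
          Polynomial.aeval σ ((x2 i).denom) *
          ((a 3 : ℂ) * Polynomial.eval₂ (algebraMap ℝ ℂ) τ (x1 i).num -
            (a i.castSucc : ℂ) * Polynomial.eval₂ (algebraMap ℝ ℂ) τ (x1 i).denom))) * hPD
    exact (mul_eq_zero.mp hGeval).resolve_left hDτ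
  -- evaluation at the real parameter t
  have hGt : G.eval t = 0 := by rw [hGzero, Polynomial.eval_zero]
  have hid : ∀ (P : Polynomial ℝ) (x : ℝ), Polynomial.eval₂ (RingHom.id ℝ) x P = P.eval x :=
    fun P x => rfl
  set σr : ℝ := RFeval ψ t with hσrdef
  have hσr : σr = ψ.num.eval t / ψ.denom.eval t := rfl
  have hAr : (compN (x2 i).num ψ.num ψ.denom).eval t =
      (ψ.denom.eval t) ^ (x2 i).num.natDegree * (x2 i).num.eval σr := by
    have h := compN_eval (RingHom.id ℝ) (x2 i).num ψ.num ψ.denom t (by rwa [hid])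
    simpa only [hid, Polynomial.map_id, ← hσr] using h
  have hBr : (compN (x2 i).denom ψ.num ψ.denom).eval t =
      (ψ.denom.eval t) ^ (x2 i).denom.natDegree * (x2 i).denom.eval σr := by
    have h := compN_eval (RingHom.id ℝ) (x2 i).denom ψ.num ψ.denom t (by rwa [hid])
    simpa only [hid, Polynomial.map_id, ← hσr] using h
  have hq2σ : (x2 i).denom.eval σr ≠ 0 := hdr2 i
  have hq1t : (x1 i).denom.eval t ≠ 0 := hdr1 i
  simp only [hGdef, Polynomial.eval_sub, Polynomial.eval_mul, Polynomial.eval_pow,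
    Polynomial.eval_C, hAr, hBr] at hGt
  have hclear : ((x2 i).num.eval σr * (x1 i).denom.eval t -
      (x1 i).num.eval t * (x2 i).denom.eval σr) * lam.denom.eval t -
      lam.num.eval t * (x2 i).denom.eval σr *
        (a 3 * (x1 i).num.eval t - a i.castSucc * (x1 i).denom.eval t) = 0 := by
    have h2 : (ψ.denom.eval t) ^ ((x2 i).num.natDegree + (x2 i).denom.natDegree) *
        (((x2 i).num.eval σr * (x1 i).denom.eval t -
          (x1 i).num.eval t * (x2 i).denom.eval σr) * lam.denom.eval t -
          lam.num.eval t * (x2 i).denom.eval σr *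
            (a 3 * (x1 i).num.eval t - a i.castSucc * (x1 i).denom.eval t)) =
        (ψ.denom.eval t) ^ ((x2 i).num.natDegree + (x2 i).denom.natDegree) * 0 := by
      rw [mul_zero]
      linear_combination hGt
    exact mul_left_cancel₀ (pow_ne_zero _ hqψt) h2
  show RFeval (x2 i) σr - RFeval (x1 i) t = RFeval lam t * (a 3 * RFeval (x1 i) t - a i.castSucc)
  rw [RFeval, RFeval, RFeval]
  field_simp
  linear_combination hclear

end
end

section
/- If C2 = P_ã(C1) and G(t,s) is the polynomial associated with the projection P_ã, then G(t,s) divides 𝒩(t,s) in ℝ[t,s], where 𝒩(t,s) is the square-free part of the numerator of the rational function N(t,s)·(x1(t) − x2(s)). -/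
noncomputable section

open Polynomial Filter Matrix

/-! ### Auxiliary machinery -/

namespace Stmt4Aux

open Polynomial

/-- Evaluation of a real polynomial at a complex point. -/
def pe (p : Polynomial ℝ) (z : ℂ) : ℂ := (p.map (algebraMap ℝ ℂ)).eval z

/-- `pe` as a ring homomorphism. -/
def peHom (z : ℂ) : Polynomial ℝ →+* ℂ := (evalRingHom z).comp (mapRingHom (algebraMap ℝ ℂ))

lemma pe_eq (p : Polynomial ℝ) (z : ℂ) : pe p z = peHom z p := rfl

lemma pe_zero_finite {p : Polynomial ℝ} (hp : p ≠ 0) : {z | pe p z = 0}.Finite := by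
  have hm : p.map (algebraMap ℝ ℂ) ≠ 0 := by
    simpa [Polynomial.map_eq_zero_iff (algebraMap ℝ ℂ).injective] using hp
  have := Set.not_infinite.1 (fun h => hm ((p.map (algebraMap ℝ ℂ)).eq_zero_of_infinite_isRoot h))
  simpa [pe, Polynomial.IsRoot] using this

lemma RFevalC_eq (f : RatFunc ℝ) (z : ℂ) : RFevalC f z = pe f.num z / pe f.denom z := rfl

lemma evalC_div (p q : Polynomial ℝ) (hq : q ≠ 0) (z : ℂ) (hz : pe q z ≠ 0) :
    pe ((algebraMap (Polynomial ℝ) (RatFunc ℝ) p / algebraMap _ _ q).denom) z ≠ 0 ∧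
    RFevalC (algebraMap (Polynomial ℝ) (RatFunc ℝ) p / algebraMap _ _ q) z = pe p z / pe q z := by
  set f := algebraMap (Polynomial ℝ) (RatFunc ℝ) p / algebraMap _ _ q with hf
  have hqK : algebraMap (Polynomial ℝ) (RatFunc ℝ) q ≠ 0 := RatFunc.algebraMap_ne_zero hq
  have hdK : algebraMap (Polynomial ℝ) (RatFunc ℝ) f.denom ≠ 0 :=
    RatFunc.algebraMap_ne_zero f.denom_ne_zero
  have e1 : algebraMap (Polynomial ℝ) (RatFunc ℝ) f.num = f * algebraMap _ _ f.denom :=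
    (div_eq_iff hdK).1 (RatFunc.num_div_denom f)
  have e2 : f * algebraMap (Polynomial ℝ) (RatFunc ℝ) q = algebraMap _ _ p := by
    rw [hf, div_mul_cancel₀ _ hqK]
  have hcross : f.num * q = p * f.denom := by
    apply IsFractionRing.injective (Polynomial ℝ) (RatFunc ℝ)
    rw [_root_.map_mul, _root_.map_mul, e1, mul_assoc,
      mul_comm (algebraMap (Polynomial ℝ) (RatFunc ℝ) f.denom), ← mul_assoc, e2]
  have hdvd : f.denom ∣ q := by
    have h1 : f.denom ∣ f.num * q := ⟨p, by rw [hcross]; ring⟩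
    exact ((RatFunc.isCoprime_num_denom f).symm.dvd_of_dvd_mul_left h1)
  have hdz : pe f.denom z ≠ 0 := by
    obtain ⟨u, hu⟩ := hdvd
    intro h0
    rw [pe_eq] at hz
    rw [hu, _root_.map_mul] at hz
    exact hz (by rw [← pe_eq, h0, zero_mul])
  refine ⟨hdz, ?_⟩
  have hev : pe f.num z * pe q z = pe p z * pe f.denom z := by
    simp only [pe_eq, ← _root_.map_mul, hcross]
  rw [RFevalC_eq, div_eq_div_iff hdz hz, hev]

lemma hasDerivAt_pe (p : Polynomial ℝ) (z : ℂ) :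
    HasDerivAt (pe p) (pe (derivative p) z) z := by
  have h := Polynomial.hasDerivAt (p.map (algebraMap ℝ ℂ)) z
  rw [Polynomial.derivative_map] at h
  exact h

lemma hasDerivAt_RFevalC (f : RatFunc ℝ) (z : ℂ) (hz : pe f.denom z ≠ 0) :
    HasDerivAt (RFevalC f) (RFevalC (RFderiv f) z) z := by
  have h := (hasDerivAt_pe f.num z).div (hasDerivAt_pe f.denom z) hz
  have hval : RFevalC (RFderiv f) z =
      (pe (derivative f.num) z * pe f.denom z - pe f.num z * pe (derivative f.denom) z) /
        pe f.denom z ^ 2 := by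
    have h2 := evalC_div (derivative f.num * f.denom - f.num * derivative f.denom) (f.denom ^ 2)
      (pow_ne_zero 2 f.denom_ne_zero) z (by simp only [pe_eq, map_pow]; exact pow_ne_zero 2 hz)
    unfold RFderiv
    rw [← _root_.map_mul, ← _root_.map_mul, ← _root_.map_sub, h2.2]
    simp only [pe_eq, _root_.map_sub, _root_.map_mul, _root_.map_pow]
  rw [hval]
  exact h

/-- The determinant identity at the heart of the proof. -/
lemma det_zero (v1 v2 X A : Fin 3 → ℂ) (F F' c a3 dψ : ℂ)
    (hlam : F * a3 - c ≠ 0) (hdψ : dψ ≠ 0)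
    (hv2 : ∀ i, v2 i * dψ =
      ((F' * A i - c * v1 i) * (F * a3 - c) - (F * A i - c * X i) * (F' * a3)) /
        (F * a3 - c) ^ 2) :
    dotProduct (crossProduct v1 v2)
      (fun i => X i - (F * A i - c * X i) / (F * a3 - c)) = 0 := by
  have hv2' : ∀ i, v2 i =
      ((F' * A i - c * v1 i) * (F * a3 - c) - (F * A i - c * X i) * (F' * a3)) /
        ((F * a3 - c) ^ 2 * dψ) := by
    intro i
    rw [← div_div, eq_div_iff hdψ]
    exact hv2 i
  simp only [cross_apply, dotProduct, Fin.sum_univ_three]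
  simp only [Matrix.cons_val_zero, Matrix.cons_val_one, Matrix.head_cons,
    Matrix.cons_val_two, Matrix.tail_cons]
  rw [hv2' 0, hv2' 1, hv2' 2]
  field_simp
  ring

section Related

variable {n a : Fin 4 → ℝ} {x1 x2 : Fin 3 → RatFunc ℝ}

/-- Abbreviations for the scalar quantities appearing in the projection. -/
def Fc (n : Fin 4 → ℝ) (x1 : Fin 3 → RatFunc ℝ) (t : ℂ) : ℂ :=
  (∑ i : Fin 3, (n i.castSucc : ℂ) * RFevalC (x1 i) t) + (n (Fin.last 3) : ℂ)

def cc (n a : Fin 4 → ℝ) : ℂ := ∑ i, (n i : ℂ) * (a i : ℂ)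

lemma sum_homC (t : ℂ) : (∑ j, cmap4 n j * homC x1 t j) = Fc n x1 t := by
  rw [Fin.sum_univ_castSucc]
  simp [cmap4, homC, Fc, evalAffC]
  rw [show (3 : Fin 4) = Fin.last 3 from rfl, Fin.snoc_last, mul_one]

lemma related_coords {t s : ℂ} (h : RelatedByProj n a x1 x2 t s) :
    Fc n x1 t * (a (Fin.last 3) : ℂ) - cc n a ≠ 0 ∧
    ∀ i : Fin 3, (Fc n x1 t * (a (Fin.last 3) : ℂ) - cc n a) * RFevalC (x2 i) s =
      Fc n x1 t * (a i.castSucc : ℂ) - cc n a * RFevalC (x1 i) t := by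
  obtain ⟨d1, d2, lam, hlam, heq⟩ := h
  have hsum := sum_homC (n := n) (x1 := x1) t
  have hc : (∑ i, cmap4 n i * cmap4 a i) = cc n a := rfl
  have hlast := congrFun heq (Fin.last 3)
  simp only [projHC, Pi.sub_apply, Pi.smul_apply, smul_eq_mul] at hlast
  rw [hsum, hc] at hlast
  simp only [homC, Fin.snoc_last, mul_one] at hlast
  have hlameq : Fc n x1 t * (a (Fin.last 3) : ℂ) - cc n a = lam := by
    simpa [cmap4] using hlast
  constructor
  · rw [hlameq]; exact hlam
  · intro i
    have hi := congrFun heq i.castSucc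
    simp only [projHC, Pi.sub_apply, Pi.smul_apply, smul_eq_mul] at hi
    rw [hsum, hc] at hi
    simp only [homC, Fin.snoc_castSucc, cmap4] at hi
    rw [hlameq]
    exact hi.symm

/-- Two parameters related to the same `t` give the same point of `C2`. -/
lemma collide {t s s' : ℂ} (h1 : RelatedByProj n a x1 x2 t s)
    (h2 : RelatedByProj n a x1 x2 t s') : evalAffC x2 s = evalAffC x2 s' := by
  obtain ⟨_, _, lam, hlam, heq⟩ := h1
  obtain ⟨_, _, lam', hlam', heq'⟩ := h2
  have h := heq.symm.trans heq'
  have hlast := congrFun h (Fin.last 3)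
  simp only [Pi.smul_apply, homC, Fin.snoc_last, smul_eq_mul, mul_one] at hlast
  funext i
  have hi := congrFun h i.castSucc
  simp only [Pi.smul_apply, homC, Fin.snoc_castSucc, smul_eq_mul] at hi
  rw [hlast] at hi
  exact mul_left_cancel₀ (hlast ▸ hlam) hi

/-- If the associated function were constant, properness of `x2` would be violated. -/
lemma deriv_ne_zero {ψ : RatFunc ℝ} (hx2 : ProperParam x2)
    (hproj : IsProjectionOf n a x1 x2) (hψ : AssociatedRF n a x1 x2 ψ) :
    RFderiv ψ ≠ 0 := by
  intro h0
  -- Step 1: `ψ` is a constant.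
  have hnum : derivative ψ.num * ψ.denom - ψ.num * derivative ψ.denom = 0 := by
    have hq2 : algebraMap (Polynomial ℝ) (RatFunc ℝ) (ψ.denom ^ 2) ≠ 0 :=
      RatFunc.algebraMap_ne_zero (pow_ne_zero 2 ψ.denom_ne_zero)
    unfold RFderiv at h0
    rw [_root_.div_eq_zero_iff] at h0
    rcases h0 with h | h
    · rw [← _root_.map_mul, ← _root_.map_mul, ← _root_.map_sub] at h
      exact (map_eq_zero_iff _ (IsFractionRing.injective (Polynomial ℝ) (RatFunc ℝ))).1 h
    · exact absurd h hq2
  have hqq' : ψ.denom ∣ derivative ψ.denom := by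
    have h1 : ψ.denom ∣ ψ.num * derivative ψ.denom :=
      ⟨derivative ψ.num, by linear_combination -hnum⟩
    exact (RatFunc.isCoprime_num_denom ψ).symm.dvd_of_dvd_mul_left h1
  have hq' : derivative ψ.denom = 0 :=
    eq_zero_of_dvd_of_degree_lt hqq' (degree_derivative_lt ψ.denom_ne_zero)
  have hq1 : ψ.denom = 1 :=
    (Polynomial.Monic.natDegree_eq_zero ψ.monic_denom).1 (natDegree_eq_zero_of_derivative_eq_zero hq')
  have hp' : derivative ψ.num = 0 := by
    have h2 := hnum
    rw [hq', hq1] at h2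
    simpa using h2
  have hpc : ψ.num = Polynomial.C (ψ.num.coeff 0) :=
    eq_C_of_natDegree_eq_zero (natDegree_eq_zero_of_derivative_eq_zero hp')
  set α : ℂ := (ψ.num.coeff 0 : ℂ) with hα
  have hconst : ∀ z : ℂ, RFevalC ψ z = α := by
    intro z
    rw [RFevalC_eq, hq1]
    conv_lhs => rw [hpc]
    simp [pe, hα]
  -- Step 2: contradiction with properness of `x2` and surjectivity of the projection.
  obtain ⟨-, -, hcov⟩ := hproj
  have hψ' : ∀ᶠ t : ℂ in Filter.cofinite, RelatedByProj n a x1 x2 t α := by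
    filter_upwards [hψ] with t ht
    rwa [hconst t] at ht
  set B := {t : ℂ | DomC x2 t ∧ ∃ t', t' ≠ t ∧ DomC x2 t' ∧ evalAffC x2 t' = evalAffC x2 t}
    with hBdef
  have hB : B.Finite := hx2
  have hGood : ∀ᶠ s0 : ℂ in Filter.cofinite,
      (∃ t, RelatedByProj n a x1 x2 t s0) ∧ s0 ∉ B ∧ s0 ≠ α := by
    filter_upwards [hcov, hB.eventually_cofinite_notMem,
      (Set.finite_singleton α).eventually_cofinite_notMem] with s0 h1 h2 h3
    exact ⟨h1, h2, by simpa using h3⟩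
  set G := {s0 : ℂ | (∃ t, RelatedByProj n a x1 x2 t s0) ∧ s0 ∉ B ∧ s0 ≠ α} with hGdef
  have hGinf : G.Infinite := by
    have hfin : Gᶜ.Finite := by
      have h4 := Filter.eventually_cofinite.1 hGood
      rw [hGdef, Set.compl_setOf]
      exact h4
    simpa using hfin.infinite_compl
  classical
  set tf : ℂ → ℂ := fun s0 => if h : ∃ t, RelatedByProj n a x1 x2 t s0 then h.choose else 0
    with htfdef
  have htf : ∀ s0 ∈ G, RelatedByProj n a x1 x2 (tf s0) s0 := by
    intro s0 hs0
    have h1 : ∃ t, RelatedByProj n a x1 x2 t s0 := hs0.1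
    simp only [htfdef, dif_pos h1]
    exact h1.choose_spec
  have hinj : Set.InjOn tf G := by
    intro s hs s' hs' he
    by_contra hne
    have hcol := collide (htf s hs) (he ▸ htf s' hs')
    exact hs.2.1 ⟨(htf s hs).2.1, s', fun h => hne h.symm, (htf s' hs').2.1, hcol.symm⟩
  have hS0 : {t : ℂ | ¬ RelatedByProj n a x1 x2 t α}.Finite := Filter.eventually_cofinite.1 hψ'
  have himg : (tf '' G).Infinite := hGinf.image hinj
  obtain ⟨y, hy⟩ := (himg.diff hS0).nonempty
  obtain ⟨hyG, hyS0⟩ := hy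
  obtain ⟨s0, hs0G, rfl⟩ := hyG
  have hrel2 : RelatedByProj n a x1 x2 (tf s0) α := not_not.1 hyS0
  have hcol := collide (htf s0 hs0G) hrel2
  exact hs0G.2.1 ⟨(htf s0 hs0G).2.1, α, Ne.symm hs0G.2.2, hrel2.2.1, hcol.symm⟩

/-- The key vanishing statement: for almost every parameter `t`, the determinant
`N(t,ψ(t))·(x1(t) − x2(ψ(t)))` vanishes. -/
lemma key_vanish {ψ : RatFunc ℝ} (hψ : AssociatedRF n a x1 x2 ψ)
    (hd : RFderiv ψ ≠ 0) :
    ∀ᶠ z : ℂ in Filter.cofinite, DomC x1 z ∧ DomC x2 (RFevalC ψ z) ∧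
      NdotC x1 x2 z (RFevalC ψ z) = 0 := by
  have hnum0 : (RFderiv ψ).num ≠ 0 := RatFunc.num_ne_zero hd
  have hUfin : {t : ℂ | ¬ RelatedByProj n a x1 x2 t (RFevalC ψ t)}.Finite :=
    Filter.eventually_cofinite.1 hψ
  have hUopen : IsOpen {t : ℂ | RelatedByProj n a x1 x2 t (RFevalC ψ t)} := by
    rw [← isClosed_compl_iff]
    have hcpl : ({t : ℂ | RelatedByProj n a x1 x2 t (RFevalC ψ t)})ᶜ =
        {t : ℂ | ¬ RelatedByProj n a x1 x2 t (RFevalC ψ t)} := by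
      ext w; simp
    rw [hcpl]
    exact hUfin.isClosed
  have ev2 : ∀ᶠ z : ℂ in Filter.cofinite, pe ψ.denom z ≠ 0 :=
    Filter.eventually_cofinite.2 (by simpa using pe_zero_finite ψ.denom_ne_zero)
  have ev3 : ∀ᶠ z : ℂ in Filter.cofinite, pe (RFderiv ψ).num z ≠ 0 :=
    Filter.eventually_cofinite.2 (by simpa using pe_zero_finite hnum0)
  have ev4 : ∀ᶠ z : ℂ in Filter.cofinite, pe (RFderiv ψ).denom z ≠ 0 :=
    Filter.eventually_cofinite.2 (by simpa using pe_zero_finite (RFderiv ψ).denom_ne_zero)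
  filter_upwards [hψ, ev2, ev3, ev4] with z hz1 hden hnum' hden'
  obtain ⟨hc1, hc2⟩ := related_coords hz1
  refine ⟨hz1.1, hz1.2.1, ?_⟩
  set s := RFevalC ψ z with hs
  set A : Fin 3 → ℂ := fun i => (a i.castSucc : ℂ) with hA
  set a3 : ℂ := (a (Fin.last 3) : ℂ) with ha3
  set c : ℂ := cc n a with hcdef
  set dψ : ℂ := RFevalC (RFderiv ψ) z with hdψdef
  have hdψ : dψ ≠ 0 := by
    rw [hdψdef, RFevalC_eq]
    exact div_ne_zero hnum' hden'
  have hψder : HasDerivAt (RFevalC ψ) dψ z := hasDerivAt_RFevalC ψ z hden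
  have hv1 : ∀ i, HasDerivAt (RFevalC (x1 i)) (RFevalC (RFderiv (x1 i)) z) z :=
    fun i => hasDerivAt_RFevalC (x1 i) z (hz1.1 i)
  have hv2 : ∀ i, HasDerivAt (RFevalC (x2 i)) (RFevalC (RFderiv (x2 i)) s) s :=
    fun i => hasDerivAt_RFevalC (x2 i) s (hz1.2.1 i)
  have hcomp : ∀ i, HasDerivAt (fun τ => RFevalC (x2 i) (RFevalC ψ τ))
      (RFevalC (RFderiv (x2 i)) s * dψ) z :=
    fun i => by have h := (hv2 i).comp z hψder; exact h
  set F' : ℂ := ∑ i : Fin 3, (n i.castSucc : ℂ) * RFevalC (RFderiv (x1 i)) z with hF'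
  have hF : HasDerivAt (Fc n x1) F' z := by
    have h1 : HasDerivAt (fun τ => ∑ i : Fin 3, (n i.castSucc : ℂ) * RFevalC (x1 i) τ) F' z :=
      HasDerivAt.fun_sum (fun i _ => (hv1 i).const_mul _)
    have h2 := h1.add_const ((n (Fin.last 3) : ℂ))
    exact h2
  have hL : ∀ i, HasDerivAt (fun τ => RFevalC (x2 i) (RFevalC ψ τ))
      (((F' * A i - c * RFevalC (RFderiv (x1 i)) z) * (Fc n x1 z * a3 - c) -
        (Fc n x1 z * A i - c * RFevalC (x1 i) z) * (F' * a3)) / (Fc n x1 z * a3 - c) ^ 2) z := by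
    intro i
    have hnum : HasDerivAt (fun τ => Fc n x1 τ * A i - c * RFevalC (x1 i) τ)
        (F' * A i - c * RFevalC (RFderiv (x1 i)) z) z :=
      (hF.mul_const _).sub ((hv1 i).const_mul _)
    have hden2 : HasDerivAt (fun τ => Fc n x1 τ * a3 - c) (F' * a3) z := by
      have := (hF.mul_const a3).sub_const c
      simpa using this
    have hRi := hnum.div hden2 hc1
    apply hRi.congr_of_eventuallyEq
    filter_upwards [hUopen.mem_nhds hz1] with τ hτ
    obtain ⟨hd1, hd2⟩ := related_coords hτ
    simp only [Pi.div_apply]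
    rw [eq_div_iff hd1]
    rw [mul_comm]
    exact hd2 i
  have hveq : ∀ i, RFevalC (RFderiv (x2 i)) s * dψ =
      ((F' * A i - c * RFevalC (RFderiv (x1 i)) z) * (Fc n x1 z * a3 - c) -
        (Fc n x1 z * A i - c * RFevalC (x1 i) z) * (F' * a3)) / (Fc n x1 z * a3 - c) ^ 2 :=
    fun i => (hcomp i).unique (hL i)
  have hu : (fun i => RFevalC (x1 i) z - RFevalC (x2 i) s) =
      (fun i => RFevalC (x1 i) z -
        (Fc n x1 z * A i - c * RFevalC (x1 i) z) / (Fc n x1 z * a3 - c)) := by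
    funext i
    congr 1
    rw [eq_div_iff hc1, mul_comm]
    exact hc2 i
  show NdotC x1 x2 z s = 0
  unfold NdotC
  rw [hu]
  exact det_zero (fun i => RFevalC (RFderiv (x1 i)) z) (fun i => RFevalC (RFderiv (x2 i)) s)
    (fun i => RFevalC (x1 i) z) A (Fc n x1 z) F' c a3 dψ hc1 hdψ hveq

end Related

section Algebra

/-- `Fin 1` variables are one variable. -/
def coeffIso : MvPolynomial (Fin 1) ℝ ≃ₐ[ℝ] Polynomial ℝ :=
  (MvPolynomial.renameEquiv ℝ (Equiv.equivPUnit.{1, 1} (Fin 1))).trans (MvPolynomial.pUnitAlgEquiv ℝ)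

/-- The identification of `ℝ[t,s]` with `(ℝ[t])[s]`. -/
def E2 : MvPolynomial (Fin 2) ℝ ≃ₐ[ℝ] Polynomial (Polynomial ℝ) :=
  (MvPolynomial.renameEquiv ℝ (Equiv.swap 0 1)).trans
    ((MvPolynomial.finSuccEquiv ℝ 1).trans (Polynomial.mapAlgEquiv coeffIso))

lemma coeffIso_X : coeffIso (MvPolynomial.X 0) = Polynomial.X := by
  show (MvPolynomial.pUnitAlgEquiv ℝ) ((MvPolynomial.renameEquiv ℝ _) (MvPolynomial.X 0)) = _
  rw [MvPolynomial.renameEquiv_apply, MvPolynomial.rename_X]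
  show MvPolynomial.eval₂ Polynomial.C (fun _ => Polynomial.X) _ = _
  rw [MvPolynomial.eval₂_X]

lemma E2_X0 : E2 (MvPolynomial.X 0) = Polynomial.C Polynomial.X := by
  show (Polynomial.mapAlgEquiv coeffIso) ((MvPolynomial.finSuccEquiv ℝ 1)
    ((MvPolynomial.renameEquiv ℝ (Equiv.swap 0 1)) (MvPolynomial.X 0))) = _
  rw [MvPolynomial.renameEquiv_apply, MvPolynomial.rename_X, Equiv.swap_apply_left]
  have h1 : (1 : Fin 2) = Fin.succ 0 := rfl
  rw [h1, MvPolynomial.finSuccEquiv_X_succ]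
  simp only [Polynomial.coe_mapAlgEquiv, Polynomial.map_C]
  exact congrArg Polynomial.C coeffIso_X

lemma E2_X1 : E2 (MvPolynomial.X 1) = Polynomial.X := by
  show (Polynomial.mapAlgEquiv coeffIso) ((MvPolynomial.finSuccEquiv ℝ 1)
    ((MvPolynomial.renameEquiv ℝ (Equiv.swap 0 1)) (MvPolynomial.X 1))) = _
  rw [MvPolynomial.renameEquiv_apply, MvPolynomial.rename_X, Equiv.swap_apply_right,
    MvPolynomial.finSuccEquiv_X_zero]
  simp

lemma aeval2_E2 (z s : ℂ) (F : MvPolynomial (Fin 2) ℝ) :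
    aeval2 z s F = Polynomial.eval₂ (peHom z) s (E2 F) := by
  have hhom : ((MvPolynomial.aeval (R := ℝ) (S₁ := ℂ) ![z, s]) : MvPolynomial (Fin 2) ℝ →+* ℂ) =
      (Polynomial.eval₂RingHom (peHom z) s).comp
        (E2.toAlgHom.toRingHom : MvPolynomial (Fin 2) ℝ →+* Polynomial (Polynomial ℝ)) := by
    apply MvPolynomial.ringHom_ext
    · intro r
      have hC : E2 (MvPolynomial.C r) = Polynomial.C (Polynomial.C r) := by
        have : (MvPolynomial.C r : MvPolynomial (Fin 2) ℝ) = algebraMap ℝ _ r := rfl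
        rw [this, AlgEquiv.commutes]
        rfl
      simp [hC, peHom]
    · intro i
      fin_cases i
      · simp [E2_X0, peHom]
      · simp [E2_X1]
  have := RingHom.congr_fun hhom F
  simpa [aeval2] using this

end Algebra

end Stmt4Aux

/-- If `C2 = P_ã(C1)` and `G(t,s) = p(t) − s·q(t)` is the polynomial
associated with the projection `P_ã` (where `ψ = p/q` is the associated rational
function), then `G(t,s)` divides `𝒩(t,s)` in `ℝ[t,s]`, where `𝒩(t,s)` is the
square-free part of the numerator of `N(t,s)·(x1(t) − x2(s))`. -/
theorem statement_4 (x1 x2 : Fin 3 → RatFunc ℝ) (n a : Fin 4 → ℝ) (ψ : RatFunc ℝ)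
    (Ncal : MvPolynomial (Fin 2) ℝ)
    (hx1 : ProperParam x1) (hx2 : ProperParam x2)
    (hnl1 : ¬ IsLineParam x1) (hnl2 : ¬ IsLineParam x2)
    (hn : PlaneNormalNZ n) (hplane : InPlane x2 n)
    (hsame : ¬ ∃ m : Fin 4 → ℝ, PlaneNormalNZ m ∧ InPlane x1 m ∧ InPlane x2 m)
    (hproj : IsProjectionOf n a x1 x2)
    (hψ : AssociatedRF n a x1 x2 ψ)
    (hN : IsNcal x1 x2 Ncal) :
    assocPoly ψ ∣ Ncal := by
  classical
  obtain ⟨hsq, hiff⟩ := hN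
  have hd : RFderiv ψ ≠ 0 := Stmt4Aux.deriv_ne_zero hx2 hproj hψ
  have hkey := Stmt4Aux.key_vanish hψ hd
  set algK := algebraMap (Polynomial ℝ) (RatFunc ℝ) with halgK
  have hKq : algK ψ.denom ≠ 0 := RatFunc.algebraMap_ne_zero ψ.denom_ne_zero
  set N' : Polynomial (Polynomial ℝ) := Stmt4Aux.E2 Ncal with hN'def
  set d := N'.natDegree with hddef
  set Rp : Polynomial ℝ :=
    ∑ i ∈ Finset.range (d + 1), N'.coeff i * ψ.num ^ i * ψ.denom ^ (d - i) with hRpdef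
  -- ℂ-evaluation of `Rp`
  have hRpz : ∀ z : ℂ, Stmt4Aux.pe ψ.denom z ≠ 0 →
      Stmt4Aux.peHom z Rp = Stmt4Aux.pe ψ.denom z ^ d * aeval2 z (RFevalC ψ z) Ncal := by
    intro z hz
    rw [Stmt4Aux.aeval2_E2 z _ Ncal, Polynomial.eval₂_eq_sum_range, hRpdef, map_sum,
      Finset.mul_sum]
    refine Finset.sum_congr rfl fun i hi => ?_
    have hle : i ≤ d := Nat.lt_succ_iff.1 (Finset.mem_range.1 hi)
    rw [_root_.map_mul, _root_.map_mul, _root_.map_pow, _root_.map_pow]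
    simp only [← Stmt4Aux.pe_eq]
    have hψz : RFevalC ψ z = Stmt4Aux.pe ψ.num z / Stmt4Aux.pe ψ.denom z := rfl
    rw [hψz, div_pow, ← pow_sub_mul_pow (Stmt4Aux.pe ψ.denom z) hle]
    field_simp
    ring
  -- `Rp` vanishes identically
  have hRp0 : Rp = 0 := by
    by_contra hne
    have hev : ∀ᶠ z : ℂ in Filter.cofinite, Stmt4Aux.pe Rp z = 0 := by
      have evq : ∀ᶠ z : ℂ in Filter.cofinite, Stmt4Aux.pe ψ.denom z ≠ 0 :=
        Filter.eventually_cofinite.2 (by simpa using Stmt4Aux.pe_zero_finite ψ.denom_ne_zero)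
      filter_upwards [hkey, evq] with z hz hqz
      rw [Stmt4Aux.pe_eq, hRpz z hqz, (hiff z _ hz.1 hz.2.1).2 hz.2.2, mul_zero]
    have hfin := Stmt4Aux.pe_zero_finite hne
    have hfin2 := Filter.eventually_cofinite.1 hev
    refine Set.infinite_univ (α := ℂ) ((hfin.union hfin2).subset fun z _ => ?_)
    by_cases h : Stmt4Aux.pe Rp z = 0
    · exact Or.inl h
    · exact Or.inr h
  -- hence `N'` evaluated at `s = ψ` gives zero
  have haev : Polynomial.eval₂ algK ψ N' = 0 := by
    have hKside : algK Rp = algK ψ.denom ^ d * Polynomial.eval₂ algK ψ N' := by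
      rw [Polynomial.eval₂_eq_sum_range, hRpdef, map_sum, Finset.mul_sum]
      refine Finset.sum_congr rfl fun i hi => ?_
      have hle : i ≤ d := Nat.lt_succ_iff.1 (Finset.mem_range.1 hi)
      rw [_root_.map_mul, _root_.map_mul, _root_.map_pow, _root_.map_pow]
      have h6 : algK ψ.num = ψ * algK ψ.denom := (div_eq_iff hKq).1 (RatFunc.num_div_denom ψ)
      rw [h6, mul_pow, ← pow_mul_pow_sub (algK ψ.denom) hle]
      ring
    rw [hRp0, map_zero] at hKside
    rcases mul_eq_zero.1 hKside.symm with h | h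
    · exact absurd h (pow_ne_zero d hKq)
    · exact h
  -- the associated polynomial viewed in `(ℝ[t])[s]`
  set G2 : Polynomial (Polynomial ℝ) := Polynomial.C ψ.num - Polynomial.X * Polynomial.C ψ.denom
    with hG2def
  have hE2G : Stmt4Aux.E2 (assocPoly ψ) = G2 := by
    unfold assocPoly
    rw [map_sub, _root_.map_mul, Stmt4Aux.E2_X1]
    have h1 : ∀ r : Polynomial ℝ, Stmt4Aux.E2 (Polynomial.aeval (MvPolynomial.X 0) r)
        = Polynomial.C r := by
      intro r
      have h2 := Polynomial.aeval_algHom_apply Stmt4Aux.E2 (MvPolynomial.X 0) r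
      rw [← h2, Stmt4Aux.E2_X0]
      have h3 := Polynomial.aeval_algHom_apply
        (Polynomial.CAlgHom (R := ℝ) (A := Polynomial ℝ)) (Polynomial.X : Polynomial ℝ) r
      simpa [Polynomial.aeval_X_left_apply, Polynomial.CAlgHom] using h3
    rw [h1, h1]
  have hprimG : G2.IsPrimitive := by
    intro r hr
    have hc0 : r ∣ ψ.num := by
      have h4 := (Polynomial.C_dvd_iff_dvd_coeff r G2).1 hr 0
      simpa [hG2def, Polynomial.mul_coeff_zero] using h4
    have hc1 : r ∣ ψ.denom := by
      have h4 := (Polynomial.C_dvd_iff_dvd_coeff r G2).1 hr 1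
      rw [hG2def] at h4
      have h5 : (Polynomial.C ψ.num - Polynomial.X * Polynomial.C ψ.denom).coeff 1
          = -ψ.denom := by
        have hx1c : ((Polynomial.X : Polynomial (Polynomial ℝ)) *
            Polynomial.C ψ.denom).coeff (0 + 1) = (Polynomial.C ψ.denom).coeff 0 :=
          Polynomial.coeff_X_mul _ 0
        simp only [Polynomial.coeff_sub, Polynomial.coeff_C, Polynomial.coeff_C_zero] at hx1c ⊢
        rw [hx1c]
        norm_num
      rw [h5] at h4
      exact (dvd_neg).1 h4
    obtain ⟨u, v, huv⟩ := RatFunc.isCoprime_num_denom ψ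
    exact isUnit_of_dvd_one (huv ▸ dvd_add (hc0.mul_left u) (hc1.mul_left v))
  have hqψ : Polynomial.C (algK ψ.num) = Polynomial.C ψ * Polynomial.C (algK ψ.denom) := by
    have h6 : algK ψ.num = ψ * algK ψ.denom := (div_eq_iff hKq).1 (RatFunc.num_div_denom ψ)
    rw [h6, _root_.map_mul]
  have hu : IsUnit (-(Polynomial.C (algK ψ.denom))) :=
    ((Polynomial.isUnit_C).2 hKq.isUnit).neg
  have hGKassoc : Associated ((Polynomial.X : Polynomial (RatFunc ℝ)) - Polynomial.C ψ)
      (G2.map algK) := by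
    refine ⟨hu.unit, ?_⟩
    rw [IsUnit.unit_spec, hG2def, Polynomial.map_sub, Polynomial.map_mul, Polynomial.map_C,
      Polynomial.map_C, Polynomial.map_X, hqψ]
    ring
  have hdvdK : G2.map algK ∣ N'.map algK := by
    have hroot : ((Polynomial.X : Polynomial (RatFunc ℝ)) - Polynomial.C ψ) ∣ N'.map algK :=
      Polynomial.dvd_iff_isRoot.2 (by rw [Polynomial.IsRoot, Polynomial.eval_map]; exact haev)
    exact hGKassoc.symm.dvd.trans hroot
  have hirr : Irreducible G2 :=
    (hprimG.irreducible_iff_irreducible_map_fraction_map (K := RatFunc ℝ)).2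
      (hGKassoc.irreducible (Polynomial.irreducible_X_sub_C ψ))
  have hprime : Prime G2 := UniqueFactorizationMonoid.irreducible_iff_prime.1 hirr
  obtain ⟨H, hH⟩ := hdvdK
  obtain ⟨b, hb⟩ := IsLocalization.integerNormalization_map_to_map
    (nonZeroDivisors (Polynomial ℝ)) H
  have hbne : (b : Polynomial ℝ) ≠ 0 := nonZeroDivisors.ne_zero b.2
  have hmain : Polynomial.C (b : Polynomial ℝ) * N' =
      G2 * IsLocalization.integerNormalization (nonZeroDivisors (Polynomial ℝ)) H := by
    apply Polynomial.map_injective algK (IsFractionRing.injective (Polynomial ℝ) (RatFunc ℝ))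
    rw [Polynomial.map_mul, Polynomial.map_mul, hb, hH, Polynomial.map_C]
    rw [Algebra.smul_def, Polynomial.algebraMap_apply]
    ring
  rcases hprime.2.2 _ _ ⟨_, hmain⟩ with hcb | hNdvd
  · exfalso
    have hCbne : (Polynomial.C (b : Polynomial ℝ) : Polynomial (Polynomial ℝ)) ≠ 0 := by
      simpa using hbne
    have hle := Polynomial.natDegree_le_of_dvd hcb hCbne
    have hdeg : G2.natDegree = 1 := by
      have hform : G2 = Polynomial.C (-ψ.denom) * Polynomial.X + Polynomial.C ψ.num := by
        rw [hG2def, map_neg]; ring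
      rw [hform]
      exact Polynomial.natDegree_linear (neg_ne_zero.2 ψ.denom_ne_zero)
    rw [hdeg, Polynomial.natDegree_C] at hle
    omega
  · obtain ⟨W, hW⟩ := hNdvd
    refine ⟨Stmt4Aux.E2.symm W, ?_⟩
    have h3 : Ncal = Stmt4Aux.E2.symm N' := (AlgEquiv.symm_apply_apply _ _).symm
    rw [h3, hW, _root_.map_mul, ← hE2G, AlgEquiv.symm_apply_apply]

end
end

section
/- Let (p1,q1) and (p2,q2) be two different lucky pairs with pj ∈ C1, qj ∈ C2, pj = x1(tj), qj = x2(sj), tj, sj ∈ ℝ for j = 1,2, and with (t1,s1), (t2,s2) lying on the plane curve 𝒩*. If (t1,s1) and (t2,s2) are connected by one real branch of 𝒩* such that there is no point (t̂,ŝ) ∈ 𝒩* with t̂ ∈ [t1,t2] at which the partial derivative ∂𝒩/∂t vanishes, then there is at most one projection P_ã mapping C1 onto C2 such that P_ã(pj) = qj for both j = 1,2. -/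
noncomputable section

open Polynomial Filter Matrix

section AuxiliaryLemmas
open Set
set_option maxHeartbeats 1000000

lemma aeval2_eq_eval (F : MvPolynomial (Fin 2) ℝ) (t s : ℝ) :
    MvPolynomial.aeval ![t, s] F =
      Polynomial.eval t (MvPolynomial.aeval ![Polynomial.X, Polynomial.C s] F) := by
  induction F using MvPolynomial.induction_on with
  | C a => simp
  | add p q hp hq => simp [map_add, hp, hq]
  | mul_X p i hp =>
    fin_cases i <;> simp [_root_.map_mul, hp]

lemma deriv_aeval2 (F : MvPolynomial (Fin 2) ℝ) (s : ℝ) :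
    derivative (MvPolynomial.aeval ![Polynomial.X, Polynomial.C s] F) =
      MvPolynomial.aeval ![Polynomial.X, Polynomial.C s] (MvPolynomial.pderiv 0 F) := by
  induction F using MvPolynomial.induction_on with
  | C a => simp
  | add p q hp hq => simp [map_add, hp, hq]
  | mul_X p i hp =>
    fin_cases i
    · simp [_root_.map_mul, MvPolynomial.pderiv_mul, hp, derivative_mul]
      ring
    · simp [_root_.map_mul, MvPolynomial.pderiv_mul, hp, derivative_mul, MvPolynomial.pderiv_X_of_ne]
      ring

lemma cont_aeval2 (F : MvPolynomial (Fin 2) ℝ) :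
    Continuous fun p : ℝ × ℝ => (MvPolynomial.aeval ![p.1, p.2] F : ℝ) := by
  induction F using MvPolynomial.induction_on with
  | C a => simpa using continuous_const
  | add p q hp hq => simpa [map_add, Pi.add_def] using hp.add hq
  | mul_X p i hp =>
    fin_cases i
    · simpa [_root_.map_mul, Pi.mul_def] using hp.mul continuous_fst
    · simpa [_root_.map_mul, Pi.mul_def] using hp.mul continuous_snd

lemma hasDerivAt_aeval2 (F : MvPolynomial (Fin 2) ℝ) (s t : ℝ) :
    HasDerivAt (fun u : ℝ => (MvPolynomial.aeval ![u, s] F : ℝ))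
      (MvPolynomial.aeval ![t, s] (MvPolynomial.pderiv 0 F)) t := by
  have h : (fun u : ℝ => (MvPolynomial.aeval ![u, s] F : ℝ)) =
      fun u => Polynomial.eval u (MvPolynomial.aeval ![Polynomial.X, Polynomial.C s] F) := by
    funext u; exact aeval2_eq_eval F u s
  rw [h, aeval2_eq_eval (MvPolynomial.pderiv 0 F) t s, ← deriv_aeval2]
  exact Polynomial.hasDerivAt _ t

lemma cont_aeval2_left (F : MvPolynomial (Fin 2) ℝ) (s : ℝ) :
    Continuous fun t : ℝ => (MvPolynomial.aeval ![t, s] F : ℝ) := by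
  induction F using MvPolynomial.induction_on with
  | C a => simpa using continuous_const
  | add p q hp hq => simpa [map_add, Pi.add_def] using hp.add hq
  | mul_X p i hp =>
    fin_cases i
    · simpa [_root_.map_mul, Pi.mul_def] using hp.mul continuous_id
    · simpa [_root_.map_mul, Pi.mul_def] using hp.mul continuous_const

/-- At an interior point of the branch, `φ` takes both larger and smaller values. -/
lemma no_interior_extremum (F : MvPolynomial (Fin 2) ℝ) (lo hi : ℝ)
    (φ : ℝ → ℝ) (hφc : ContinuousOn φ (Icc lo hi))
    (hcurve : ∀ t ∈ Icc lo hi, MvPolynomial.aeval ![t, φ t] F = 0)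
    (hreg : ∀ t ∈ Icc lo hi, ∀ s : ℝ, MvPolynomial.aeval ![t, s] F = 0 →
      MvPolynomial.aeval ![t, s] (MvPolynomial.pderiv 0 F) ≠ 0)
    (tst : ℝ) (htst : tst ∈ Ioo lo hi) :
    (∃ u ∈ Icc lo hi, φ tst < φ u) ∧ (∃ v ∈ Icc lo hi, φ v < φ tst) := by
  have htst' : tst ∈ Icc lo hi := Ioo_subset_Icc_self htst
  obtain ⟨sst, hsst⟩ : ∃ sst, sst = φ tst := ⟨_, rfl⟩
  obtain ⟨c, hc⟩ : ∃ c : ℝ, c = MvPolynomial.aeval ![tst, sst] (MvPolynomial.pderiv 0 F) :=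
    ⟨_, rfl⟩
  have hc0 : c ≠ 0 := by
    rw [hc, hsst]
    exact hreg tst htst' (φ tst) (hcurve tst htst')
  -- find a box where the partial derivative keeps the sign of c
  have hcont : ContinuousAt (fun p : ℝ × ℝ =>
      (MvPolynomial.aeval ![p.1, p.2] (MvPolynomial.pderiv 0 F) : ℝ)) (tst, sst) :=
    (cont_aeval2 _).continuousAt
  rw [Metric.continuousAt_iff] at hcont
  obtain ⟨δ₀, hδ₀, hball⟩ := hcont |c| (abs_pos.2 hc0)
  obtain ⟨δ, hδdef⟩ : ∃ δ : ℝ, δ = δ₀ / 2 := ⟨_, rfl⟩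
  have hδ : 0 < δ := by rw [hδdef]; positivity
  have hsign : ∀ t s : ℝ, |t - tst| ≤ δ → |s - sst| ≤ δ →
      |(MvPolynomial.aeval ![t, s] (MvPolynomial.pderiv 0 F) : ℝ) - c| < |c| := by
    intro t s ht hs
    have hd : dist ((t, s) : ℝ × ℝ) ((tst, sst) : ℝ × ℝ) < δ₀ := by
      rw [Prod.dist_eq]
      have : max (dist t tst) (dist s sst) ≤ δ := by
        rw [Real.dist_eq, Real.dist_eq]; exact max_le ht hs
      have hδδ₀ : δ < δ₀ := by rw [hδdef]; linarith
      exact lt_of_le_of_lt this hδδ₀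
    have h2 := hball hd
    rw [Real.dist_eq] at h2
    simp only [] at h2
    rw [← hc] at h2
    exact h2
  -- on each vertical slice of the box, F(·, s) is injective
  have hinj : ∀ s : ℝ, |s - sst| ≤ δ →
      InjOn (fun t => (MvPolynomial.aeval ![t, s] F : ℝ)) (Icc (tst - δ) (tst + δ)) := by
    intro s hs
    have hderiv : ∀ t ∈ Icc (tst - δ) (tst + δ),
        |(MvPolynomial.aeval ![t, s] (MvPolynomial.pderiv 0 F) : ℝ) - c| < |c| := by
      intro t ht
      exact hsign t s (abs_sub_le_iff.2 ⟨by linarith [ht.2], by linarith [ht.1]⟩) hs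
    have hcf : ContinuousOn (fun t => (MvPolynomial.aeval ![t, s] F : ℝ))
        (Icc (tst - δ) (tst + δ)) := by
      exact (cont_aeval2_left F s).continuousOn
    rcases lt_or_gt_of_ne hc0 with hneg | hpos
    · refine (strictAntiOn_of_deriv_neg (convex_Icc _ _) hcf ?_).injOn
      intro x hx
      rw [(hasDerivAt_aeval2 F s x).deriv]
      have := hderiv x (interior_subset (s := Icc (tst - δ) (tst + δ)) hx)
      have h2 := abs_lt.1 this
      have : |c| = -c := abs_of_neg hneg
      linarith [h2.1, h2.2, this ▸ h2.2]
    · refine (strictMonoOn_of_deriv_pos (convex_Icc _ _) hcf ?_).injOn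
      intro x hx
      rw [(hasDerivAt_aeval2 F s x).deriv]
      have := hderiv x (interior_subset (s := Icc (tst - δ) (tst + δ)) hx)
      have h2 := abs_lt.1 this
      have : |c| = c := abs_of_pos hpos
      linarith [h2.1, this ▸ h2.1]
  -- φ is continuous at tst
  have hφat : ContinuousAt φ tst :=
    hφc.continuousAt (Icc_mem_nhds htst.1 htst.2)
  rw [Metric.continuousAt_iff] at hφat
  obtain ⟨η₀, hη₀, hφball⟩ := hφat δ hδ
  obtain ⟨η, hηdef⟩ : ∃ η : ℝ, η = min (η₀ / 2) (min ((tst - lo) / 2) (min ((hi - tst) / 2) δ)) :=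
    ⟨_, rfl⟩
  have hη : 0 < η := by
    have h1 : 0 < tst - lo := by linarith [htst.1]
    have h2 : 0 < hi - tst := by linarith [htst.2]
    rw [hηdef, lt_min_iff, lt_min_iff, lt_min_iff]
    refine ⟨by linarith, by linarith, by linarith, hδ⟩
  have hηη₀ : η < η₀ := by
    rw [hηdef]
    exact lt_of_le_of_lt (min_le_left _ _) (by linarith)
  have hηδ : η ≤ δ := by
    rw [hηdef]
    exact le_trans (min_le_right _ _) (le_trans (min_le_right _ _) (min_le_right _ _))
  have hsubIcc : Icc (tst - η) (tst + η) ⊆ Icc lo hi := by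
    intro x hx
    have h1 : η ≤ (tst - lo) / 2 := by
      rw [hηdef]; exact le_trans (min_le_right _ _) (min_le_left _ _)
    have h2 : η ≤ (hi - tst) / 2 := by
      rw [hηdef]
      exact le_trans (min_le_right _ _) (le_trans (min_le_right _ _) (min_le_left _ _))
    exact ⟨by linarith [hx.1, htst.1], by linarith [hx.2, htst.2]⟩
  have hφnear : ∀ t ∈ Icc (tst - η) (tst + η), |φ t - sst| ≤ δ := by
    intro t ht
    have : dist t tst < η₀ := by
      rw [Real.dist_eq]
      have := abs_sub_le_iff.2 (⟨by linarith [ht.2], by linarith [ht.1]⟩ :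
        t - tst ≤ η ∧ tst - t ≤ η)
      linarith
    have := hφball this
    rw [Real.dist_eq] at this
    rw [hsst]
    linarith [this]
  -- φ is injective on [tst-η, tst+η]
  have hφinj : InjOn φ (Icc (tst - η) (tst + η)) := by
    intro u hu v hv huv
    have hs : |φ u - sst| ≤ δ := hφnear u hu
    have hu' : u ∈ Icc (tst - δ) (tst + δ) :=
      ⟨by linarith [hu.1, hηδ], by linarith [hu.2, hηδ]⟩
    have hv' : v ∈ Icc (tst - δ) (tst + δ) :=
      ⟨by linarith [hv.1, hηδ], by linarith [hv.2, hηδ]⟩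
    refine hinj (φ u) hs hu' hv' ?_
    show (MvPolynomial.aeval ![u, φ u] F : ℝ) = MvPolynomial.aeval ![v, φ u] F
    rw [hcurve u (hsubIcc hu), huv, hcurve v (hsubIcc hv)]
  -- endpoints of the small interval
  obtain ⟨A, hA⟩ : ∃ A : ℝ, A = tst - η := ⟨_, rfl⟩
  obtain ⟨B, hB⟩ : ∃ B : ℝ, B = tst + η := ⟨_, rfl⟩
  have hAmem : A ∈ Icc (tst - η) (tst + η) := ⟨by rw [hA], by rw [hA]; linarith⟩
  have hBmem : B ∈ Icc (tst - η) (tst + η) := ⟨by rw [hB]; linarith, by rw [hB]⟩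
  have htmem : tst ∈ Icc (tst - η) (tst + η) := ⟨by linarith, by linarith⟩
  have hAne : φ A ≠ φ tst := fun h => by
    have := hφinj hAmem htmem h; rw [hA] at this; linarith
  have hBne : φ B ≠ φ tst := fun h => by
    have := hφinj hBmem htmem h; rw [hB] at this; linarith
  -- not both below
  have hnotboth : ¬ (φ A < φ tst ∧ φ B < φ tst) := by
    rintro ⟨h1, h2⟩
    have hmlt : max (φ A) (φ B) < φ tst := max_lt h1 h2
    obtain ⟨y, hy⟩ : ∃ y : ℝ, y = (max (φ A) (φ B) + φ tst) / 2 := ⟨_, rfl⟩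
    have hy1 : max (φ A) (φ B) < y := by rw [hy]; linarith
    have hy2 : y < φ tst := by rw [hy]; linarith
    have hcA : ContinuousOn φ (Icc A tst) :=
      hφc.mono (fun x hx => hsubIcc ⟨by rw [hA] at hx; exact hx.1, by rw [hA] at hx; linarith [hx.2]⟩)
    have hcB : ContinuousOn φ (Icc tst B) :=
      hφc.mono (fun x hx => hsubIcc ⟨by rw [hB] at hx; linarith [hx.1], by rw [hB] at hx; exact hx.2⟩)
    have h1' : y ∈ Icc (φ A) (φ tst) :=
      ⟨le_trans (le_max_left _ _) hy1.le, hy2.le⟩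
    have h2' : y ∈ Icc (φ B) (φ tst) :=
      ⟨le_trans (le_max_right _ _) hy1.le, hy2.le⟩
    obtain ⟨u, hu, hu'⟩ := intermediate_value_Icc (by linarith : A ≤ tst) hcA h1'
    obtain ⟨v, hv, hv'⟩ := intermediate_value_Icc' (by linarith : tst ≤ B) hcB h2'
    have huv : u ≠ v := by
      intro h
      have hut : u ≠ tst := fun h' => by rw [h'] at hu'; linarith [hu' ▸ hy2]
      have hu2 : u < tst := lt_of_le_of_ne hu.2 hut
      have : u < v := lt_of_lt_of_le hu2 hv.1
      exact absurd h this.ne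
    rw [hA] at hu
    rw [hB] at hv
    exact huv (hφinj ⟨hu.1, by linarith [hu.2]⟩ ⟨by linarith [hv.1], hv.2⟩
      (by rw [hu', hv']))
  -- not both above
  have hnotboth' : ¬ (φ tst < φ A ∧ φ tst < φ B) := by
    rintro ⟨h1, h2⟩
    have hmlt : φ tst < min (φ A) (φ B) := lt_min h1 h2
    obtain ⟨y, hy⟩ : ∃ y : ℝ, y = (min (φ A) (φ B) + φ tst) / 2 := ⟨_, rfl⟩
    have hy1 : y < min (φ A) (φ B) := by rw [hy]; linarith
    have hy2 : φ tst < y := by rw [hy]; linarith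
    have hcA : ContinuousOn φ (Icc A tst) :=
      hφc.mono (fun x hx => hsubIcc ⟨by rw [hA] at hx; exact hx.1, by rw [hA] at hx; linarith [hx.2]⟩)
    have hcB : ContinuousOn φ (Icc tst B) :=
      hφc.mono (fun x hx => hsubIcc ⟨by rw [hB] at hx; linarith [hx.1], by rw [hB] at hx; exact hx.2⟩)
    have h1' : y ∈ Icc (φ tst) (φ A) :=
      ⟨hy2.le, le_trans hy1.le (min_le_left _ _)⟩
    have h2' : y ∈ Icc (φ tst) (φ B) :=
      ⟨hy2.le, le_trans hy1.le (min_le_right _ _)⟩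
    obtain ⟨u, hu, hu'⟩ := intermediate_value_Icc' (by linarith : A ≤ tst) hcA h1'
    obtain ⟨v, hv, hv'⟩ := intermediate_value_Icc (by linarith : tst ≤ B) hcB h2'
    have huv : u ≠ v := by
      intro h
      have hut : u ≠ tst := fun h' => by rw [h'] at hu'; linarith [hu' ▸ hy2]
      have hu2 : u < tst := lt_of_le_of_ne hu.2 hut
      have : u < v := lt_of_lt_of_le hu2 hv.1
      exact absurd h this.ne
    rw [hA] at hu
    rw [hB] at hv
    exact huv (hφinj ⟨hu.1, by linarith [hu.2]⟩ ⟨by linarith [hv.1], hv.2⟩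
      (by rw [hu', hv']))
  -- conclude
  rcases lt_or_gt_of_ne hAne with hA1 | hA1
  · have hB1 : φ tst < φ B := by
      rcases lt_or_gt_of_ne hBne with h | h
      · exact absurd ⟨hA1, h⟩ hnotboth
      · exact h
    exact ⟨⟨B, hsubIcc hBmem, hB1⟩, ⟨A, hsubIcc hAmem, hA1⟩⟩
  · have hB1 : φ B < φ tst := by
      rcases lt_or_gt_of_ne hBne with h | h
      · exact h
      · exact absurd ⟨hA1, h⟩ hnotboth'
    exact ⟨⟨A, hsubIcc hAmem, hA1⟩, ⟨B, hsubIcc hBmem, hB1⟩⟩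

/-- A branch of the curve cannot return to the same ordinate over a regular strip. -/
lemma no_loop (F : MvPolynomial (Fin 2) ℝ) (lo hi s0 : ℝ) (hlt : lo < hi)
    (φ : ℝ → ℝ) (hφc : ContinuousOn φ (Icc lo hi))
    (hφlo : φ lo = s0) (hφhi : φ hi = s0)
    (hcurve : ∀ t ∈ Icc lo hi, MvPolynomial.aeval ![t, φ t] F = 0)
    (hreg : ∀ t ∈ Icc lo hi, ∀ s : ℝ, MvPolynomial.aeval ![t, s] F = 0 →
      MvPolynomial.aeval ![t, s] (MvPolynomial.pderiv 0 F) ≠ 0) : False := by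
  have hlomem : lo ∈ Icc lo hi := ⟨le_refl _, hlt.le⟩
  by_cases hconst : ∀ t ∈ Icc lo hi, φ t = s0
  · -- constant branch: the polynomial F(·, s0) vanishes identically
    obtain ⟨Q, hQ⟩ : ∃ Q : Polynomial ℝ,
      Q = MvPolynomial.aeval ![Polynomial.X, Polynomial.C s0] F := ⟨_, rfl⟩
    have hroots : Q = 0 := by
      apply Polynomial.eq_zero_of_infinite_isRoot
      apply Set.Infinite.mono (s := Icc lo hi) ?_ (Set.Icc_infinite hlt)
      intro t ht
      show Polynomial.IsRoot Q t
      have := hcurve t ht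
      rw [hconst t ht] at this
      rw [Polynomial.IsRoot, hQ, ← aeval2_eq_eval]
      exact this
    have hd : MvPolynomial.aeval ![Polynomial.X, Polynomial.C s0] (MvPolynomial.pderiv 0 F)
        = 0 := by rw [← deriv_aeval2, ← hQ, hroots, derivative_zero]
    have hF0 : MvPolynomial.aeval ![lo, s0] F = 0 := by
      rw [aeval2_eq_eval, ← hQ, hroots]; simp
    have := hreg lo hlomem s0 hF0
    rw [aeval2_eq_eval, hd] at this
    simp at this
  · push_neg at hconst
    obtain ⟨t0, ht0, ht0'⟩ := hconst
    obtain ⟨tM, htM, hmax⟩ := isCompact_Icc.exists_isMaxOn ⟨lo, hlomem⟩ hφc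
    obtain ⟨tm, htm, hmin⟩ := isCompact_Icc.exists_isMinOn ⟨lo, hlomem⟩ hφc
    rcases lt_or_gt_of_ne ht0' with hlt0 | hgt0
    · -- φ t0 < s0 : use the min point
      have hminlt : φ tm < s0 := lt_of_le_of_lt (hmin ht0) hlt0
      have hio : tm ∈ Ioo lo hi := by
        refine ⟨lt_of_le_of_ne htm.1 ?_, lt_of_le_of_ne htm.2 ?_⟩
        · intro h; rw [← h, hφlo] at hminlt; linarith
        · intro h; rw [h, hφhi] at hminlt; linarith
      obtain ⟨_, v, hv, hv'⟩ := no_interior_extremum F lo hi φ hφc hcurve hreg tm hio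
      exact absurd (hmin hv) (not_le.2 hv')
    · have hmaxgt : s0 < φ tM := lt_of_lt_of_le hgt0 (hmax ht0)
      have hio : tM ∈ Ioo lo hi := by
        refine ⟨lt_of_le_of_ne htM.1 ?_, lt_of_le_of_ne htM.2 ?_⟩
        · intro h; rw [← h, hφlo] at hmaxgt; linarith
        · intro h; rw [h, hφhi] at hmaxgt; linarith
      obtain ⟨⟨u, hu, hu'⟩, _⟩ := no_interior_extremum F lo hi φ hφc hcurve hreg tM hio
      exact absurd (hmax hu) (not_le.2 hu')

lemma parallel_of_mem_two_spans (P1 Q1 P2 Q2 u u' : Fin 4 → ℂ)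
    (hu1 : u ∈ Submodule.span ℂ {P1, Q1}) (hu2 : u ∈ Submodule.span ℂ {P2, Q2})
    (hu'1 : u' ∈ Submodule.span ℂ {P1, Q1}) (hu'2 : u' ∈ Submodule.span ℂ {P2, Q2})
    (hu0 : u ≠ 0) (hQ2 : Q2 ∉ Submodule.span ℂ {P1, Q1}) :
    ∃ c : ℂ, u' = c • u := by
  by_contra hpar
  push_neg at hpar
  have hli : LinearIndependent ℂ ![u, u'] := by
    rw [LinearIndependent.pair_iff]
    intro s t hst
    by_cases ht : t = 0
    · subst ht
      have hs : s • u = 0 := by simpa using hst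
      rcases smul_eq_zero.1 hs with h | h
      · exact ⟨h, rfl⟩
      · exact absurd h hu0
    · exfalso
      apply hpar (-(s / t))
      have h1 : t • u' = -(s • u) := by
        have h := hst
        rw [add_comm, add_eq_zero_iff_eq_neg] at h
        exact h
      calc u' = t⁻¹ • (t • u') := by rw [smul_smul, inv_mul_cancel₀ ht, one_smul]
        _ = (-(s / t)) • u := by
            rw [h1, smul_neg, smul_smul, ← neg_smul]
            congr 1
            field_simp
  have hrank : Module.finrank ℂ (Submodule.span ℂ ({u, u'} : Set (Fin 4 → ℂ))) = 2 := by
    have := finrank_span_eq_card (R := ℂ) hli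
    rwa [Matrix.range_cons_cons_empty, Fintype.card_fin] at this
  have hle1 : Submodule.span ℂ ({u, u'} : Set (Fin 4 → ℂ)) ≤ Submodule.span ℂ {P1, Q1} := by
    rw [Submodule.span_le]
    rintro z hz
    rcases hz with rfl | hz
    · exact hu1
    · rw [Set.mem_singleton_iff] at hz; subst hz; exact hu'1
  have hle2 : Submodule.span ℂ ({u, u'} : Set (Fin 4 → ℂ)) ≤ Submodule.span ℂ {P2, Q2} := by
    rw [Submodule.span_le]
    rintro z hz
    rcases hz with rfl | hz
    · exact hu2
    · rw [Set.mem_singleton_iff] at hz; subst hz; exact hu'2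
  have hcard1 : Module.finrank ℂ (Submodule.span ℂ ({P1, Q1} : Set (Fin 4 → ℂ))) ≤ 2 := by
    have := finrank_range_le_card (R := ℂ) ![P1, Q1]
    rwa [Matrix.range_cons_cons_empty, Fintype.card_fin] at this
  have hcard2 : Module.finrank ℂ (Submodule.span ℂ ({P2, Q2} : Set (Fin 4 → ℂ))) ≤ 2 := by
    have := finrank_range_le_card (R := ℂ) ![P2, Q2]
    rwa [Matrix.range_cons_cons_empty, Fintype.card_fin] at this
  have heq1 : Submodule.span ℂ ({u, u'} : Set (Fin 4 → ℂ)) = Submodule.span ℂ {P1, Q1} :=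
    Submodule.eq_of_le_of_finrank_le hle1 (by rw [hrank]; exact hcard1)
  have heq2 : Submodule.span ℂ ({u, u'} : Set (Fin 4 → ℂ)) = Submodule.span ℂ {P2, Q2} :=
    Submodule.eq_of_le_of_finrank_le hle2 (by rw [hrank]; exact hcard2)
  apply hQ2
  rw [← heq1, heq2]
  exact Submodule.subset_span (by simp)

-- bridging lemmas
lemma RFevalC_real (f : RatFunc ℝ) (s : ℝ) :
    RFevalC f (s : ℂ) = ((RFeval f s : ℝ) : ℂ) := by
  unfold RFevalC RFeval
  have h1 : ((f.num.map (algebraMap ℝ ℂ)).eval (s : ℂ)) = ((f.num.eval s : ℝ) : ℂ) := by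
    rw [Polynomial.eval_map, show ((s : ℂ)) = algebraMap ℝ ℂ s from rfl,
      Polynomial.eval₂_at_apply]
    rfl
  have h2 : ((f.denom.map (algebraMap ℝ ℂ)).eval (s : ℂ)) = ((f.denom.eval s : ℝ) : ℂ) := by
    rw [Polynomial.eval_map, show ((s : ℂ)) = algebraMap ℝ ℂ s from rfl,
      Polynomial.eval₂_at_apply]
    rfl
  rw [h1, h2, Complex.ofReal_div]

lemma domR_of_domC (x : Fin 3 → RatFunc ℝ) (s : ℝ) (h : DomC x (s : ℂ)) : DomR x s := by
  intro i
  have := h i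
  intro h0
  apply this
  rw [Polynomial.eval_map, show ((s : ℂ)) = algebraMap ℝ ℂ s from rfl,
    Polynomial.eval₂_at_apply, h0]
  simp

lemma snoc_three (p : Fin 3 → ℂ) (z : ℂ) : (Fin.snoc p z : Fin 4 → ℂ) 3 = z := by
  show (Fin.snoc p z : Fin 4 → ℂ) (Fin.last 3) = z
  rw [Fin.snoc_last]

lemma plane_sum_zero (x2 : Fin 3 → RatFunc ℝ) (n : Fin 4 → ℝ) (hplane : InPlane x2 n)
    (s : ℝ) (hdom : DomC x2 (s : ℂ)) :
    (∑ i, cmap4 n i * homC x2 (s : ℂ) i) = 0 := by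
  have hR := hplane s (domR_of_domC x2 s hdom)
  rw [Fin.sum_univ_castSucc]
  have hlast : homC x2 (s : ℂ) (Fin.last 3) = 1 := by
    unfold homC; rw [Fin.snoc_last]
  have hcast : ∀ i : Fin 3, homC x2 (s : ℂ) i.castSucc = ((RFeval (x2 i) s : ℝ) : ℂ) := by
    intro i
    unfold homC
    rw [Fin.snoc_castSucc]
    exact RFevalC_real (x2 i) s
  rw [hlast]
  have : ∀ i : Fin 3, cmap4 n i.castSucc * homC x2 (s : ℂ) i.castSucc
      = ((n i.castSucc * RFeval (x2 i) s : ℝ) : ℂ) := by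
    intro i; rw [hcast i]; unfold cmap4; push_cast; ring
  rw [Finset.sum_congr rfl (fun i _ => this i)]
  have : cmap4 n (Fin.last 3) = ((n 3 : ℝ) : ℂ) := rfl
  rw [this, ← Complex.ofReal_sum]
  rw [mul_one, ← Complex.ofReal_add]
  norm_cast

lemma rel_struct (n a : Fin 4 → ℝ) (x1 x2 : Fin 3 → RatFunc ℝ) (t s : ℂ)
    (h : RelatedByProj n a x1 x2 t s) (hne : evalAffC x1 t ≠ evalAffC x2 s)
    (hna : (∑ i, cmap4 n i * cmap4 a i) ≠ 0) :
    (∑ i, cmap4 n i * homC x1 t i) ≠ 0 ∧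
      cmap4 a ∈ Submodule.span ℂ {homC x1 t, homC x2 s} := by
  obtain ⟨-, -, lam, hlam, heq⟩ := h
  have heq' : (∑ i, cmap4 n i * homC x1 t i) • cmap4 a
      - (∑ i, cmap4 n i * cmap4 a i) • homC x1 t = lam • homC x2 s := heq
  by_cases hk : (∑ i, cmap4 n i * homC x1 t i) = 0
  · exfalso
    rw [hk, zero_smul, zero_sub] at heq'
    -- evaluate at coordinate 3
    have h3 := congrFun heq' 3
    have hP3 : homC x1 t 3 = 1 := snoc_three _ _
    have hQ3 : homC x2 s 3 = 1 := snoc_three _ _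
    simp only [Pi.neg_apply, Pi.smul_apply, smul_eq_mul, hP3, hQ3, mul_one] at h3
    -- h3 : -(na) = lam
    have hPQ : homC x1 t = homC x2 s := by
      funext i
      have := congrFun heq' i
      simp only [Pi.neg_apply, Pi.smul_apply, smul_eq_mul] at this
      rw [← h3, neg_mul, neg_inj] at this
      exact mul_left_cancel₀ hna this
    apply hne
    funext i
    have := congrFun hPQ i.castSucc
    unfold homC at this
    rwa [Fin.snoc_castSucc, Fin.snoc_castSucc] at this
  · refine ⟨hk, ?_⟩
    rw [Submodule.mem_span_pair]
    refine ⟨(∑ i, cmap4 n i * homC x1 t i)⁻¹ * (∑ i, cmap4 n i * cmap4 a i),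
      (∑ i, cmap4 n i * homC x1 t i)⁻¹ * lam, ?_⟩
    have hsum : (∑ i, cmap4 n i * homC x1 t i) • cmap4 a
        = (∑ i, cmap4 n i * cmap4 a i) • homC x1 t + lam • homC x2 s := by
      rw [← heq']; abel
    rw [mul_smul, mul_smul, ← smul_add, ← hsum, smul_smul,
      inv_mul_cancel₀ hk, one_smul]

end AuxiliaryLemmas

set_option maxHeartbeats 1000000 in
/-- Let `(p1,q1)` and `(p2,q2)` be two different lucky pairs, with
`pj = x1(tj)`, `qj = x2(sj)`, `tj, sj ∈ ℝ`, and with `(t1,s1)`, `(t2,s2)` lying on the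
plane curve `𝒩*`.  If `(t1,s1)` and `(t2,s2)` are connected by one real branch of `𝒩*`
(a continuous function `φ` with graph inside `𝒩*`) such that there is no point
`(t̂,ŝ) ∈ 𝒩*` with `t̂ ∈ [t1,t2]` at which `∂𝒩/∂t` vanishes, then there is at most one
projection `P_ã` mapping `C1` onto `C2` such that `P_ã(pj) = qj` for both `j = 1,2`. -/
theorem statement_9 (x1 x2 : Fin 3 → RatFunc ℝ) (n : Fin 4 → ℝ)
    (Ncal : MvPolynomial (Fin 2) ℝ)
    (hx1 : ProperParam x1) (hx2 : ProperParam x2)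
    (hnl1 : ¬ IsLineParam x1) (hnl2 : ¬ IsLineParam x2)
    (hn : PlaneNormalNZ n) (hplane : InPlane x2 n)
    (hsame : ¬ ∃ m : Fin 4 → ℝ, PlaneNormalNZ m ∧ InPlane x1 m ∧ InPlane x2 m)
    (hN : IsNcal x1 x2 Ncal)
    (t1 t2 s1 s2 : ℝ)
    (hpairsne : (evalAffC x1 (t1 : ℂ), evalAffC x2 (s1 : ℂ)) ≠
        (evalAffC x1 (t2 : ℂ), evalAffC x2 (s2 : ℂ)))
    (hlucky1 : LuckyPair x1 x2 Ncal (t1 : ℂ) (s1 : ℂ))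
    (hlucky2 : LuckyPair x1 x2 Ncal (t2 : ℂ) (s2 : ℂ))
    (hon1 : MvPolynomial.aeval ![t1, s1] Ncal = 0)
    (hon2 : MvPolynomial.aeval ![t2, s2] Ncal = 0)
    -- `(t1,s1)` and `(t2,s2)` are connected by one real branch of `𝒩*`
    (φ : ℝ → ℝ) (hφcont : ContinuousOn φ (Set.uIcc t1 t2))
    (hφ1 : φ t1 = s1) (hφ2 : φ t2 = s2)
    (hφcurve : ∀ t ∈ Set.uIcc t1 t2, MvPolynomial.aeval ![t, φ t] Ncal = 0)
    -- there is no point of `𝒩*` with abscissa in `[t1,t2]` where `∂𝒩/∂t` vanishes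
    (hreg : ∀ th ∈ Set.uIcc t1 t2, ∀ sh : ℝ, MvPolynomial.aeval ![th, sh] Ncal = 0 →
        MvPolynomial.aeval ![th, sh] (MvPolynomial.pderiv 0 Ncal) ≠ 0) :
    ∀ a a' : Fin 4 → ℝ,
      IsProjectionOf n a x1 x2 →
      RelatedByProj n a x1 x2 (t1 : ℂ) (s1 : ℂ) →
      RelatedByProj n a x1 x2 (t2 : ℂ) (s2 : ℂ) →
      IsProjectionOf n a' x1 x2 →
      RelatedByProj n a' x1 x2 (t1 : ℂ) (s1 : ℂ) →
      RelatedByProj n a' x1 x2 (t2 : ℂ) (s2 : ℂ) →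
      ∃ c : ℝ, c ≠ 0 ∧ a' = c • a := by
  intro a a' hP hA1 hA2 hP' hA1' hA2'
  obtain ⟨ha0, hna, -⟩ := hP
  obtain ⟨ha0', hna', -⟩ := hP'
  have hcast : ∀ b : Fin 4 → ℝ, (∑ i, cmap4 n i * cmap4 b i) = ((∑ i, n i * b i : ℝ) : ℂ) := by
    intro b
    rw [Complex.ofReal_sum]
    exact Finset.sum_congr rfl fun i _ => by unfold cmap4; push_cast; ring
  have hnaC : (∑ i, cmap4 n i * cmap4 a i) ≠ 0 := by
    rw [hcast a]; exact_mod_cast hna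
  have hnaC' : (∑ i, cmap4 n i * cmap4 a' i) ≠ 0 := by
    rw [hcast a']; exact_mod_cast hna'
  -- the two points of C2 are distinct
  have hq : evalAffC x2 (s1 : ℂ) ≠ evalAffC x2 (s2 : ℂ) := by
    rcases eq_or_ne t1 t2 with rfl | hne
    · intro h; exact hpairsne (by rw [h])
    · have hs12 : s1 ≠ s2 := by
        intro hs
        rcases lt_or_gt_of_ne hne with hlt | hlt
        · have he : Set.uIcc t1 t2 = Set.Icc t1 t2 := Set.uIcc_of_le hlt.le
          rw [he] at hφcont hφcurve hreg
          exact no_loop Ncal t1 t2 s1 hlt φ hφcont hφ1 (by rw [hφ2, hs]) hφcurve hreg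
        · have he : Set.uIcc t1 t2 = Set.Icc t2 t1 := Set.uIcc_of_ge hlt.le
          rw [he] at hφcont hφcurve hreg
          exact no_loop Ncal t2 t1 s1 hlt φ hφcont (by rw [hφ2, hs]) hφ1 hφcurve hreg
      intro h
      exact hlucky1.2.2.2.1 ⟨(s1 : ℂ), (s2 : ℂ), by exact_mod_cast hs12,
        hA1.2.1, hA2.2.1, rfl, h.symm⟩
  -- span memberships
  have h1 := rel_struct n a x1 x2 (t1 : ℂ) (s1 : ℂ) hA1 hlucky1.1 hnaC
  have h2 := rel_struct n a x1 x2 (t2 : ℂ) (s2 : ℂ) hA2 hlucky2.1 hnaC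
  have h1' := rel_struct n a' x1 x2 (t1 : ℂ) (s1 : ℂ) hA1' hlucky1.1 hnaC'
  have h2' := rel_struct n a' x1 x2 (t2 : ℂ) (s2 : ℂ) hA2' hlucky2.1 hnaC'
  -- Q2 is not in the span of {P1, Q1}
  have hQ2notin : homC x2 (s2 : ℂ) ∉
      Submodule.span ℂ {homC x1 (t1 : ℂ), homC x2 (s1 : ℂ)} := by
    intro hmem
    rw [Submodule.mem_span_pair] at hmem
    obtain ⟨α, β, hab⟩ := hmem
    have e1 : α * (∑ i, cmap4 n i * homC x1 (t1 : ℂ) i)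
        + β * (∑ i, cmap4 n i * homC x2 (s1 : ℂ) i)
        = (∑ i, cmap4 n i * homC x2 (s2 : ℂ) i) := by
      rw [← hab, Finset.mul_sum, Finset.mul_sum, ← Finset.sum_add_distrib]
      exact Finset.sum_congr rfl fun i _ => by
        simp only [Pi.add_apply, Pi.smul_apply, smul_eq_mul]; ring
    rw [plane_sum_zero x2 n hplane s1 hA1.2.1, plane_sum_zero x2 n hplane s2 hA2.2.1,
      mul_zero, add_zero] at e1
    have hα : α = 0 := by
      rcases mul_eq_zero.1 e1 with h | h
      · exact h
      · exact absurd h h1.1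
    rw [hα, zero_smul, zero_add] at hab
    have h3 := congrFun hab 3
    rw [Pi.smul_apply, smul_eq_mul] at h3
    unfold homC at h3
    rw [snoc_three, snoc_three, mul_one] at h3
    rw [h3, one_smul] at hab
    apply hq
    funext i
    have := congrFun hab i.castSucc
    unfold homC at this
    rwa [Fin.snoc_castSucc, Fin.snoc_castSucc] at this
  -- parallelism over ℂ
  have hu0 : cmap4 a ≠ 0 := by
    intro h
    apply ha0
    funext i
    have := congrFun h i
    unfold cmap4 at this
    simp only [Pi.zero_apply] at this ⊢
    exact_mod_cast this
  have hu0' : cmap4 a' ≠ 0 := by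
    intro h
    apply ha0'
    funext i
    have := congrFun h i
    unfold cmap4 at this
    simp only [Pi.zero_apply] at this ⊢
    exact_mod_cast this
  obtain ⟨c, hc⟩ := parallel_of_mem_two_spans (homC x1 (t1 : ℂ)) (homC x2 (s1 : ℂ))
    (homC x1 (t2 : ℂ)) (homC x2 (s2 : ℂ)) (cmap4 a) (cmap4 a')
    h1.2 h2.2 h1'.2 h2'.2 hu0 hQ2notin
  have hcne : c ≠ 0 := by
    intro h
    rw [h, zero_smul] at hc
    exact hu0' hc
  -- c is real
  obtain ⟨i, hi⟩ := Function.ne_iff.1 ha0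
  have hci := congrFun hc i
  rw [Pi.smul_apply, smul_eq_mul] at hci
  have hi' : a i ≠ 0 := by simpa using hi
  have hcr : c = ((a' i / a i : ℝ) : ℂ) := by
    unfold cmap4 at hci
    rw [Complex.ofReal_div, eq_div_iff (by exact_mod_cast hi' : ((a i : ℝ) : ℂ) ≠ 0)]
    exact hci.symm
  refine ⟨a' i / a i, ?_, ?_⟩
  · intro h
    apply hcne
    rw [hcr, h]
    exact Complex.ofReal_zero
  · funext j
    have := congrFun hc j
    rw [Pi.smul_apply, smul_eq_mul, hcr] at this
    unfold cmap4 at this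
    rw [← Complex.ofReal_mul] at this
    have := Complex.ofReal_injective this
    rw [Pi.smul_apply, smul_eq_mul, ← this]


end
end

section
/- If P_{ã1} and P_{ã2} are two different projections both mapping C1 onto C2 (onto the same plane Π), with associated rational functions ψ1 and ψ2 respectively, then ψ1 ≠ ψ2; that is, distinct projections mapping C1 onto C2 have distinct associated rational functions. -/
noncomputable section

open Polynomial Filter Matrix

/-! ### Auxiliary definitions and lemmas -/

/-- The affine sum `c₀ x₀(t) + c₁ x₁(t) + c₂ x₂(t) + c₃` at a complex point. -/
def bigC (c : Fin 4 → ℝ) (x : Fin 3 → RatFunc ℝ) (t : ℂ) : ℂ :=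
  (c 0 : ℂ) * RFevalC (x 0) t + (c 1 : ℂ) * RFevalC (x 1) t + (c 2 : ℂ) * RFevalC (x 2) t +
    (c 3 : ℂ)

/-- The affine sum at a real point. -/
def bigR (c : Fin 4 → ℝ) (x : Fin 3 → RatFunc ℝ) (t : ℝ) : ℝ :=
  c 0 * RFeval (x 0) t + c 1 * RFeval (x 1) t + c 2 * RFeval (x 2) t + c 3

/-- Numerator polynomial of the rational function `bigC c x`. -/
def pmPoly (c : Fin 4 → ℝ) (x : Fin 3 → RatFunc ℝ) : Polynomial ℝ :=
  C (c 0) * (x 0).num * ((x 1).denom * (x 2).denom) +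
  C (c 1) * (x 1).num * ((x 0).denom * (x 2).denom) +
  C (c 2) * (x 2).num * ((x 0).denom * (x 1).denom) +
  C (c 3) * ((x 0).denom * ((x 1).denom * (x 2).denom))

lemma sum_homC (c : Fin 4 → ℝ) (x : Fin 3 → RatFunc ℝ) (t : ℂ) :
    ∑ i, cmap4 c i * homC x t i = bigC c x t := by
  have e2 : (Fin.castSucc (2 : Fin 3)) = (2 : Fin 4) := rfl
  have e3 : (Fin.last 3) = (3 : Fin 4) := rfl
  have e4 : (Fin.snoc (evalAffC x t) 1 : Fin 4 → ℂ) 3 = 1 := rfl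
  rw [Fin.sum_univ_castSucc]
  simp only [homC, cmap4, evalAffC, bigC, Fin.snoc_castSucc, Fin.snoc_last,
    Fin.sum_univ_three, e2, e3, Fin.castSucc_zero, Fin.castSucc_one, mul_one]
  rw [e4, mul_one]

lemma cast_dot (m a : Fin 4 → ℝ) :
    ∑ i, cmap4 m i * cmap4 a i = ((∑ i, m i * a i : ℝ) : ℂ) := by
  simp [cmap4]

lemma projHC_apply (n a p : Fin 4 → ℂ) (i : Fin 4) :
    projHC n a p i = (∑ j, n j * p j) * a i - (∑ j, n j * a j) * p i := by
  simp [projHC]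

lemma pmPoly_evalC (m : Fin 4 → ℝ) (x : Fin 3 → RatFunc ℝ) (t : ℂ) (h : DomC x t) :
    ((pmPoly m x).map (algebraMap ℝ ℂ)).eval t =
      ((((x 0).denom.map (algebraMap ℝ ℂ)).eval t * (((x 1).denom.map (algebraMap ℝ ℂ)).eval t *
        ((x 2).denom.map (algebraMap ℝ ℂ)).eval t))) * bigC m x t := by
  have h0 : (aeval t) (x 0).denom ≠ 0 := by
    rw [Polynomial.aeval_def, ← Polynomial.eval_map]; exact h 0
  have h1 : (aeval t) (x 1).denom ≠ 0 := by
    rw [Polynomial.aeval_def, ← Polynomial.eval_map]; exact h 1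
  have h2 : (aeval t) (x 2).denom ≠ 0 := by
    rw [Polynomial.aeval_def, ← Polynomial.eval_map]; exact h 2
  simp only [pmPoly, Polynomial.map_add, Polynomial.map_mul, Polynomial.map_C,
    Polynomial.eval_add, Polynomial.eval_mul, Polynomial.eval_C, RFevalC, bigC,
    Complex.coe_algebraMap]
  have h0' := h 0; have h1' := h 1; have h2' := h 2
  field_simp

lemma pmPoly_evalR (m : Fin 4 → ℝ) (x : Fin 3 → RatFunc ℝ) (t : ℝ) (h : DomR x t) :
    (pmPoly m x).eval t =
      ((x 0).denom.eval t * ((x 1).denom.eval t * (x 2).denom.eval t)) * bigR m x t := by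
  have h0 := h 0; have h1 := h 1; have h2 := h 2
  simp only [pmPoly, Polynomial.eval_add, Polynomial.eval_mul, Polynomial.eval_C, RFeval, bigR]
  field_simp

lemma pmPoly_zero (m : Fin 4 → ℝ) (x : Fin 3 → RatFunc ℝ) (S : Set ℂ) (hS : S.Infinite)
    (h : ∀ t ∈ S, DomC x t ∧ bigC m x t = 0) :
    pmPoly m x = 0 := by
  have hmap : (pmPoly m x).map (algebraMap ℝ ℂ) = 0 := by
    apply Polynomial.eq_zero_of_infinite_isRoot
    apply hS.mono
    intro t ht
    obtain ⟨hd, hz⟩ := h t ht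
    simp only [Set.mem_setOf_eq, Polynomial.IsRoot.def]
    rw [pmPoly_evalC m x t hd, hz, mul_zero]
  exact Polynomial.map_injective (algebraMap ℝ ℂ) (algebraMap ℝ ℂ).injective
    (by simpa using hmap)

lemma bigC_zero_of_pmPoly (m : Fin 4 → ℝ) (x : Fin 3 → RatFunc ℝ) (hpm : pmPoly m x = 0)
    (t : ℂ) (h : DomC x t) : bigC m x t = 0 := by
  have hev := pmPoly_evalC m x t h
  rw [hpm] at hev
  simp only [Polynomial.map_zero, Polynomial.eval_zero] at hev
  rcases mul_eq_zero.mp hev.symm with h' | h'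
  · rcases mul_eq_zero.mp h' with h'' | h''
    · exact absurd h'' (h 0)
    · rcases mul_eq_zero.mp h'' with h3 | h3
      · exact absurd h3 (h 1)
      · exact absurd h3 (h 2)
  · exact h'

lemma inPlane_of_pmPoly_zero (c : Fin 4 → ℝ) (x : Fin 3 → RatFunc ℝ)
    (hpm : pmPoly c x = 0) : InPlane x c := by
  intro t ht
  have hev := pmPoly_evalR c x t ht
  rw [hpm] at hev
  simp only [Polynomial.eval_zero] at hev
  have hb : bigR c x t = 0 := by
    rcases mul_eq_zero.mp hev.symm with h' | h'
    · rcases mul_eq_zero.mp h' with h'' | h''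
      · exact absurd h'' (ht 0)
      · rcases mul_eq_zero.mp h'' with h3 | h3
        · exact absurd h3 (ht 1)
        · exact absurd h3 (ht 2)
    · exact h'
  rw [Fin.sum_univ_three]
  rw [bigR] at hb
  convert hb using 3 <;> norm_num <;> exact Or.inl rfl

lemma exists_normal (a1 a2 : Fin 4 → ℝ) :
    ∃ m : Fin 4 → ℝ, (∑ i, m i * a1 i) = 0 ∧ (∑ i, m i * a2 i) = 0 ∧
      ¬(m 0 = 0 ∧ m 1 = 0 ∧ m 2 = 0) := by
  classical
  set dot : (Fin 4 → ℝ) → (Fin 4 → ℝ) →ₗ[ℝ] ℝ :=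
    fun a => ∑ j, a j • LinearMap.proj j with hdot
  have hdotval : ∀ a m : Fin 4 → ℝ, dot a m = ∑ i, m i * a i := by
    intro a m
    simp [hdot, LinearMap.sum_apply, mul_comm]
  set L : (Fin 4 → ℝ) →ₗ[ℝ] ℝ × ℝ := (dot a1).prod (dot a2) with hL
  have hker : 2 ≤ Module.finrank ℝ (LinearMap.ker L) := by
    have h1 := LinearMap.finrank_range_add_finrank_ker L
    have h2 : Module.finrank ℝ (LinearMap.range L) ≤ 2 := by
      have := Submodule.finrank_le (LinearMap.range L)
      simpa using this
    have h3 : Module.finrank ℝ (Fin 4 → ℝ) = 4 := by simp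
    omega
  have hnle : ¬ (LinearMap.ker L ≤ Submodule.span ℝ {Pi.single 3 1}) := by
    intro hle
    have h4 : Module.finrank ℝ (LinearMap.ker L) ≤
        Module.finrank ℝ (Submodule.span ℝ ({Pi.single 3 1} : Set (Fin 4 → ℝ))) :=
      Submodule.finrank_mono hle
    have h5 : Module.finrank ℝ (Submodule.span ℝ ({Pi.single 3 1} : Set (Fin 4 → ℝ))) = 1 := by
      apply finrank_span_singleton
      intro h
      have := congrFun h 3
      simp at this
    omega
  rw [SetLike.not_le_iff_exists] at hnle
  obtain ⟨m, hmK, hmns⟩ := hnle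
  refine ⟨m, ?_, ?_, ?_⟩
  · have h6 := (LinearMap.mem_ker.mp hmK)
    have := congrArg Prod.fst h6
    simpa [hL, hdotval] using this
  · have h6 := (LinearMap.mem_ker.mp hmK)
    have := congrArg Prod.snd h6
    simpa [hL, hdotval] using this
  · rintro ⟨h0, h1, h2⟩
    apply hmns
    have hm : m = m 3 • (Pi.single 3 1 : Fin 4 → ℝ) := by
      funext i
      fin_cases i <;> simp [h0, h1, h2]
    rw [hm]
    exact Submodule.smul_mem _ _ (Submodule.mem_span_singleton_self _)

/-- If `P_{ã1}` and `P_{ã2}` are two different projections both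
mapping `C1` onto `C2` (onto the same plane `Π`), with associated rational functions
`ψ1` and `ψ2` respectively, then `ψ1 ≠ ψ2`: distinct projections mapping `C1` onto
`C2` have distinct associated rational functions. -/
theorem statement_10 (x1 x2 : Fin 3 → RatFunc ℝ) (n a1 a2 : Fin 4 → ℝ)
    (ψ1 ψ2 : RatFunc ℝ)
    (hx1 : ProperParam x1) (hx2 : ProperParam x2)
    (hnl1 : ¬ IsLineParam x1) (hnl2 : ¬ IsLineParam x2)
    (hn : PlaneNormalNZ n) (hplane : InPlane x2 n)
    (hsame : ¬ ∃ m : Fin 4 → ℝ, PlaneNormalNZ m ∧ InPlane x1 m ∧ InPlane x2 m)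
    (hproj1 : IsProjectionOf n a1 x1 x2) (hproj2 : IsProjectionOf n a2 x1 x2)
    (hdiff : ¬ ∃ c : ℝ, c ≠ 0 ∧ a2 = c • a1)
    (hψ1 : AssociatedRF n a1 x1 x2 ψ1) (hψ2 : AssociatedRF n a2 x1 x2 ψ2) :
    ψ1 ≠ ψ2 := by
  intro hψeq
  rw [← hψeq] at hψ2
  obtain ⟨ha1, hna1R, hproj1e⟩ := hproj1
  obtain ⟨ha2, hna2R, -⟩ := hproj2
  obtain ⟨m, hm1, hm2, hmNZ⟩ := exists_normal a1 a2
  have hev1 : ∀ᶠ t : ℂ in cofinite, RelatedByProj n a1 x1 x2 t (RFevalC ψ1 t) := hψ1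
  have hev2 : ∀ᶠ t : ℂ in cofinite, RelatedByProj n a2 x1 x2 t (RFevalC ψ1 t) := hψ2
  set T : Set ℂ := {t | RelatedByProj n a1 x1 x2 t (RFevalC ψ1 t) ∧
      RelatedByProj n a2 x1 x2 t (RFevalC ψ1 t)} with hTdef
  have hTinf : T.Infinite := by
    have hTc : Tᶜ.Finite := by
      have h := Filter.eventually_cofinite.mp (hev1.and hev2)
      exact h
    have := hTc.infinite_compl
    simpa using this
  -- key dichotomy
  have hkey : ∀ t ∈ T, bigC n x1 t = 0 ∨ bigC m x1 t = 0 := by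
    intro t ht
    have hr1 : DomC x1 t ∧ DomC x2 (RFevalC ψ1 t) ∧ ∃ lam : ℂ, lam ≠ 0 ∧
        projHC (cmap4 n) (cmap4 a1) (homC x1 t) = lam • homC x2 (RFevalC ψ1 t) := ht.1
    have hr2 : DomC x1 t ∧ DomC x2 (RFevalC ψ1 t) ∧ ∃ lam : ℂ, lam ≠ 0 ∧
        projHC (cmap4 n) (cmap4 a2) (homC x1 t) = lam • homC x2 (RFevalC ψ1 t) := ht.2
    obtain ⟨hd1, hd2, lam1, hlam1, he1⟩ := hr1
    obtain ⟨-, -, lam2, hlam2, he2⟩ := hr2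
    have e1 : ∀ i, (∑ j, cmap4 n j * homC x1 t j) * cmap4 a1 i -
        (∑ j, cmap4 n j * cmap4 a1 j) * homC x1 t i = lam1 * homC x2 (RFevalC ψ1 t) i := by
      intro i
      have h := congrFun he1 i
      rw [projHC_apply] at h
      simpa using h
    have e2 : ∀ i, (∑ j, cmap4 n j * homC x1 t j) * cmap4 a2 i -
        (∑ j, cmap4 n j * cmap4 a2 j) * homC x1 t i = lam2 * homC x2 (RFevalC ψ1 t) i := by
      intro i
      have h := congrFun he2 i
      rw [projHC_apply] at h
      simpa using h
    set α : ℂ := ∑ j, cmap4 n j * homC x1 t j with hα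
    set na1 : ℂ := ∑ j, cmap4 n j * cmap4 a1 j with hna1
    set na2 : ℂ := ∑ j, cmap4 n j * cmap4 a2 j with hna2
    have comb : ∀ i, α * (lam2 * cmap4 a1 i - lam1 * cmap4 a2 i)
        = (lam2 * na1 - lam1 * na2) * homC x1 t i := by
      intro i
      linear_combination lam2 * e1 i - lam1 * e2 i
    by_cases hβ : lam2 * na1 - lam1 * na2 = 0
    · by_cases hal : α = 0
      · left
        rw [← sum_homC]
        exact hal
      · exfalso
        have hprop : ∀ i, lam2 * cmap4 a1 i = lam1 * cmap4 a2 i := by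
          intro i
          have h1 : α * (lam2 * cmap4 a1 i - lam1 * cmap4 a2 i) = 0 := by
            rw [comb i, hβ, zero_mul]
          exact sub_eq_zero.mp ((mul_eq_zero.mp h1).resolve_left hal)
        obtain ⟨i0, hi0⟩ := Function.ne_iff.mp ha1
        have hcross : ∀ i, a1 i0 * a2 i = a2 i0 * a1 i := by
          intro i
          have h1 : lam2 * ((a1 i : ℝ) : ℂ) = lam1 * ((a2 i : ℝ) : ℂ) := by
            simpa [cmap4] using hprop i
          have h2 : lam2 * ((a1 i0 : ℝ) : ℂ) = lam1 * ((a2 i0 : ℝ) : ℂ) := by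
            simpa [cmap4] using hprop i0
          have h3 : (lam1 * lam2) * (((a1 i0 : ℝ) : ℂ) * ((a2 i : ℝ) : ℂ))
              = (lam1 * lam2) * (((a2 i0 : ℝ) : ℂ) * ((a1 i : ℝ) : ℂ)) := by
            linear_combination (lam1 * ((a2 i : ℝ) : ℂ)) * h2 -
              (lam1 * ((a2 i0 : ℝ) : ℂ)) * h1
          have h4 := mul_left_cancel₀ (mul_ne_zero hlam1 hlam2) h3
          exact_mod_cast h4
        have ha2i : ∀ i, a2 i = (a2 i0 / a1 i0) * a1 i := by
          intro i
          rw [div_mul_eq_mul_div, eq_div_iff hi0]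
          linear_combination hcross i
        have hcR0 : a2 i0 / a1 i0 ≠ 0 := by
          intro h0
          apply ha2
          funext i
          rw [ha2i i, h0, zero_mul]
          rfl
        exact hdiff ⟨a2 i0 / a1 i0, hcR0, funext fun i => by
          rw [ha2i i]; simp⟩
    · right
      rw [← sum_homC]
      have hpi : ∀ i, homC x1 t i = (lam2 * na1 - lam1 * na2)⁻¹ *
          (α * (lam2 * cmap4 a1 i - lam1 * cmap4 a2 i)) := by
        intro i
        rw [comb i, inv_mul_cancel_left₀ hβ]
      calc ∑ i, cmap4 m i * homC x1 t i
          = ∑ i, (((lam2 * na1 - lam1 * na2)⁻¹ * α * lam2) * (cmap4 m i * cmap4 a1 i) -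
              ((lam2 * na1 - lam1 * na2)⁻¹ * α * lam1) * (cmap4 m i * cmap4 a2 i)) := by
            refine Finset.sum_congr rfl fun i _ => ?_
            rw [hpi i]; ring
        _ = ((lam2 * na1 - lam1 * na2)⁻¹ * α * lam2) * (∑ i, cmap4 m i * cmap4 a1 i) -
              ((lam2 * na1 - lam1 * na2)⁻¹ * α * lam1) * (∑ i, cmap4 m i * cmap4 a2 i) := by
            rw [Finset.sum_sub_distrib, ← Finset.mul_sum, ← Finset.mul_sum]
        _ = 0 := by
            rw [cast_dot m a1, cast_dot m a2, hm1, hm2]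
            simp
  -- split into two infinite cases
  set Sn : Set ℂ := {t | DomC x1 t ∧ bigC n x1 t = 0} with hSn
  set Sm : Set ℂ := {t | DomC x1 t ∧ bigC m x1 t = 0} with hSm
  have hsub : T ⊆ Sn ∪ Sm := by
    intro t ht
    have hd1 : DomC x1 t := (show DomC x1 t ∧ _ ∧ _ from ht.1).1
    rcases hkey t ht with h | h
    · exact Or.inl ⟨hd1, h⟩
    · exact Or.inr ⟨hd1, h⟩
  have hun : (Sn ∪ Sm).Infinite := hTinf.mono hsub
  by_cases hSni : Sn.Infinite
  · -- C1 lies in the plane n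
    have hpz : pmPoly n x1 = 0 :=
      pmPoly_zero n x1 Sn hSni fun t ht => ⟨ht.1, ht.2⟩
    exact hsame ⟨n, hn, inPlane_of_pmPoly_zero n x1 hpz, hplane⟩
  · have hSmi : Sm.Infinite := by
      intro hfin
      exact hun ((Set.not_infinite.mp hSni).union hfin)
    have hpz : pmPoly m x1 = 0 :=
      pmPoly_zero m x1 Sm hSmi fun t ht => ⟨ht.1, ht.2⟩
    have hip1 : InPlane x1 m := inPlane_of_pmPoly_zero m x1 hpz
    -- C2 also lies in the plane m
    have hev : ∀ᶠ s : ℂ in cofinite, DomC x2 s ∧ bigC m x2 s = 0 := by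
      filter_upwards [hproj1e] with s hs
      obtain ⟨t, hrel⟩ := hs
      have hr : DomC x1 t ∧ DomC x2 s ∧ ∃ lam : ℂ, lam ≠ 0 ∧
          projHC (cmap4 n) (cmap4 a1) (homC x1 t) = lam • homC x2 s := hrel
      obtain ⟨hd1, hd2, lam, hlam, heq⟩ := hr
      refine ⟨hd2, ?_⟩
      have hq : ∀ i, lam * homC x2 s i = (∑ j, cmap4 n j * homC x1 t j) * cmap4 a1 i -
          (∑ j, cmap4 n j * cmap4 a1 j) * homC x1 t i := by
        intro i
        have h := congrFun heq i
        rw [projHC_apply] at h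
        simpa using h.symm
      have hb1 : bigC m x1 t = 0 := bigC_zero_of_pmPoly m x1 hpz t hd1
      have hsum : lam * (∑ i, cmap4 m i * homC x2 s i) = 0 := by
        rw [Finset.mul_sum]
        calc ∑ i, lam * (cmap4 m i * homC x2 s i)
            = ∑ i, ((∑ j, cmap4 n j * homC x1 t j) * (cmap4 m i * cmap4 a1 i) -
                (∑ j, cmap4 n j * cmap4 a1 j) * (cmap4 m i * homC x1 t i)) := by
              refine Finset.sum_congr rfl fun i _ => ?_
              rw [mul_left_comm, hq i]; ring
          _ = (∑ j, cmap4 n j * homC x1 t j) * (∑ i, cmap4 m i * cmap4 a1 i) -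
                (∑ j, cmap4 n j * cmap4 a1 j) * (∑ i, cmap4 m i * homC x1 t i) := by
              rw [Finset.sum_sub_distrib, ← Finset.mul_sum, ← Finset.mul_sum]
          _ = 0 := by
              rw [cast_dot m a1, hm1, sum_homC m x1 t, hb1]
              simp
      have h0 := (mul_eq_zero.mp hsum).resolve_left hlam
      rwa [sum_homC] at h0
    have hS2inf : {s : ℂ | DomC x2 s ∧ bigC m x2 s = 0}.Infinite := by
      have hc : {s : ℂ | DomC x2 s ∧ bigC m x2 s = 0}ᶜ.Finite := by
        have h := Filter.eventually_cofinite.mp hev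
        exact h
      have := hc.infinite_compl
      simpa using this
    have hpz2 : pmPoly m x2 = 0 :=
      pmPoly_zero m x2 _ hS2inf fun s hs => ⟨hs.1, hs.2⟩
    exact hsame ⟨m, hmNZ, hip1, inPlane_of_pmPoly_zero m x2 hpz2⟩

end
end

section
/- Let x1(t) = (x1(t), y1(t), z1(t)) be a rational parametrization (with real rational function components) of a space curve C1, let (x0, y0, z0) ∈ ℝ³ and let (u0, v0, w0) ∈ ℝ³ ∖ {(0,0,0)}. If the determinant of the 3×3 matrix with rows (x1(t) − x0, y1(t) − y0, z1(t) − z0), (x1'(t), y1'(t), z1'(t)), (u0, v0, w0) vanishes identically as a rational function of t, then C1 is contained in a plane: there exist real constants a, b, c, d with (a,b,c) ≠ (0,0,0) such that a·x1(t) + b·y1(t) + c·z1(t) + d = 0 identically. -/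
noncomputable section

open Polynomial Filter Matrix

private lemma RFeval_div (P Q : Polynomial ℝ) (t : ℝ) (hQ : Q.eval t ≠ 0) :
    RFeval (algebraMap (Polynomial ℝ) (RatFunc ℝ) P / algebraMap (Polynomial ℝ) (RatFunc ℝ) Q) t
      = P.eval t / Q.eval t := by
  have hQ0 : Q ≠ 0 := fun h => hQ (by simp [h])
  set r := algebraMap (Polynomial ℝ) (RatFunc ℝ) P / algebraMap (Polynomial ℝ) (RatFunc ℝ) Q
    with hr
  have h1 : r.num * Q = P * r.denom := (RatFunc.num_mul_eq_mul_denom_iff hQ0).mpr hr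
  have h2 : r.num.eval t * Q.eval t = P.eval t * r.denom.eval t := by
    have := congrArg (Polynomial.eval t) h1
    simpa using this
  have hd : r.denom.eval t ≠ 0 := by
    intro hd0
    have hn0 : r.num.eval t = 0 := by
      have h3 := h2
      rw [hd0, mul_zero] at h3
      exact (mul_eq_zero.mp h3).resolve_right hQ
    obtain ⟨a, b, hab⟩ := RatFunc.isCoprime_num_denom r
    have := congrArg (Polynomial.eval t) hab
    simp [hn0, hd0] at this
  rw [RFeval, div_eq_div_iff hd hQ]
  linarith [h2]

private lemma RFeval_RFderiv (f : RatFunc ℝ) (t : ℝ) (h : f.denom.eval t ≠ 0) :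
    RFeval (RFderiv f) t =
      ((Polynomial.derivative f.num).eval t * f.denom.eval t
        - f.num.eval t * (Polynomial.derivative f.denom).eval t) / (f.denom.eval t) ^ 2 := by
  have h2 : (f.denom ^ 2).eval t ≠ 0 := by
    simpa [Polynomial.eval_pow] using pow_ne_zero 2 h
  rw [RFderiv, ← _root_.map_mul, ← _root_.map_mul, ← _root_.map_sub, RFeval_div _ _ t h2]
  simp [Polynomial.eval_pow]

private lemma wronskian_dep (A B : Polynomial ℝ)
    (h : A * Polynomial.derivative B - B * Polynomial.derivative A = 0) :
    ∃ α β : ℝ, ¬(α = 0 ∧ β = 0) ∧ Polynomial.C α * A + Polynomial.C β * B = 0 := by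
  rcases eq_or_ne A 0 with hA | hA
  · exact ⟨1, 0, by norm_num, by simp [hA]⟩
  rcases eq_or_ne B 0 with hB | hB
  · exact ⟨0, 1, by norm_num, by simp [hB]⟩
  set d := GCDMonoid.gcd A B with hd
  obtain ⟨A0, hA0⟩ : d ∣ A := gcd_dvd_left A B
  obtain ⟨B0, hB0⟩ : d ∣ B := gcd_dvd_right A B
  have hdne : d ≠ 0 := fun h0 => hA (by rw [hA0, h0, zero_mul])
  have hA0ne : A0 ≠ 0 := fun h0 => hA (by rw [hA0, h0, mul_zero])
  have hB0ne : B0 ≠ 0 := fun h0 => hB (by rw [hB0, h0, mul_zero])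
  have hco : IsCoprime A0 B0 := by
    have h1 := isCoprime_div_gcd_div_gcd (p := A) (q := B) hB
    have e1 : A / d = A0 := by rw [hA0]; exact mul_div_cancel_left₀ _ hdne
    have e2 : B / d = B0 := by rw [hB0]; exact mul_div_cancel_left₀ _ hdne
    rwa [← hd, e1, e2] at h1
  have hkey : d ^ 2 * (A0 * Polynomial.derivative B0 - B0 * Polynomial.derivative A0) = 0 := by
    rw [← h, hA0, hB0]
    simp only [Polynomial.derivative_mul]
    ring
  have hw0 : A0 * Polynomial.derivative B0 - B0 * Polynomial.derivative A0 = 0 :=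
    (mul_eq_zero.mp hkey).resolve_left (pow_ne_zero 2 hdne)
  have hA0dvd : A0 ∣ Polynomial.derivative A0 := by
    apply hco.dvd_of_dvd_mul_left
    exact ⟨Polynomial.derivative B0, by linear_combination -hw0⟩
  have hA0' : Polynomial.derivative A0 = 0 := by
    by_contra hne
    exact absurd (lt_of_le_of_lt (Polynomial.degree_le_of_dvd hA0dvd hne)
      (Polynomial.degree_derivative_lt hA0ne)) (lt_irrefl _)
  have hB0' : Polynomial.derivative B0 = 0 := by
    have h3 : A0 * Polynomial.derivative B0 = 0 := by
      rw [sub_eq_zero] at hw0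
      rw [hw0, hA0', mul_zero]
    exact (mul_eq_zero.mp h3).resolve_left hA0ne
  obtain hAc := Polynomial.eq_C_of_derivative_eq_zero hA0'
  obtain hBc := Polynomial.eq_C_of_derivative_eq_zero hB0'
  refine ⟨B0.coeff 0, -(A0.coeff 0), ?_, ?_⟩
  · rintro ⟨h1, h2⟩
    apply hB0ne
    rw [hBc, h1, map_zero]
  · rw [hA0, hB0, hAc, hBc]
    simp only [Polynomial.coeff_C_zero, map_neg]
    ring

private lemma domR_infinite (x1 : Fin 3 → RatFunc ℝ) : {t : ℝ | DomR x1 t}.Infinite := by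
  have hfin : {t : ℝ | ¬ DomR x1 t}.Finite := by
    apply Set.Finite.subset
      (Set.finite_iUnion fun i : Fin 3 =>
        Polynomial.finite_setOf_isRoot (RatFunc.denom_ne_zero (x1 i)))
    intro t ht
    simp only [DomR, not_forall, not_ne_iff] at ht
    obtain ⟨i, hi⟩ := ht
    exact Set.mem_iUnion.mpr ⟨i, hi⟩
  have h2 := hfin.infinite_compl
  have h3 : {t : ℝ | ¬ DomR x1 t}ᶜ = {t : ℝ | DomR x1 t} := by
    ext t; simp
  rwa [h3] at h2

private lemma master (x1 : Fin 3 → RatFunc ℝ) (P0 e g : Fin 3 → ℝ)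
    (hW : ∀ t : ℝ, DomR x1 t →
      (e 0 * (RFeval (x1 0) t - P0 0) + e 1 * (RFeval (x1 1) t - P0 1)
        + e 2 * (RFeval (x1 2) t - P0 2)) *
      (g 0 * RFeval (RFderiv (x1 0)) t + g 1 * RFeval (RFderiv (x1 1)) t
        + g 2 * RFeval (RFderiv (x1 2)) t)
      - (g 0 * (RFeval (x1 0) t - P0 0) + g 1 * (RFeval (x1 1) t - P0 1)
        + g 2 * (RFeval (x1 2) t - P0 2)) *
      (e 0 * RFeval (RFderiv (x1 0)) t + e 1 * RFeval (RFderiv (x1 1)) t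
        + e 2 * RFeval (RFderiv (x1 2)) t) = 0)
    (hind : ∀ α β : ℝ, ¬(α = 0 ∧ β = 0) →
      ¬(α * e 0 + β * g 0 = 0 ∧ α * e 1 + β * g 1 = 0 ∧ α * e 2 + β * g 2 = 0)) :
    ∃ a b c d : ℝ, ¬ (a = 0 ∧ b = 0 ∧ c = 0) ∧
      ∀ t : ℝ, DomR x1 t →
        a * RFeval (x1 0) t + b * RFeval (x1 1) t + c * RFeval (x1 2) t + d = 0 := by
  classical
  set p : Fin 3 → Polynomial ℝ := fun i => (x1 i).num with hp
  set q : Fin 3 → Polynomial ℝ := fun i => (x1 i).denom with hq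
  set Q : Polynomial ℝ := q 0 * q 1 * q 2 with hQ
  set Ap : Polynomial ℝ := Polynomial.C (e 0) * (p 0 * q 1 * q 2)
      + Polynomial.C (e 1) * (q 0 * p 1 * q 2) + Polynomial.C (e 2) * (q 0 * q 1 * p 2)
      - Polynomial.C (e 0 * P0 0 + e 1 * P0 1 + e 2 * P0 2) * Q with hAp
  set Bp : Polynomial ℝ := Polynomial.C (g 0) * (p 0 * q 1 * q 2)
      + Polynomial.C (g 1) * (q 0 * p 1 * q 2) + Polynomial.C (g 2) * (q 0 * q 1 * p 2)
      - Polynomial.C (g 0 * P0 0 + g 1 * P0 1 + g 2 * P0 2) * Q with hBp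
  have hWpol : Ap * Polynomial.derivative Bp - Bp * Polynomial.derivative Ap = 0 := by
    apply Polynomial.eq_zero_of_infinite_isRoot
    apply Set.Infinite.mono _ (domR_infinite x1)
    intro t ht
    have hb0 : (q 0).eval t ≠ 0 := ht 0
    have hb1 : (q 1).eval t ≠ 0 := ht 1
    have hb2 : (q 2).eval t ≠ 0 := ht 2
    have hWt := hW t ht
    have hx0 : RFeval (x1 0) t = (p 0).eval t / (q 0).eval t := rfl
    have hx1 : RFeval (x1 1) t = (p 1).eval t / (q 1).eval t := rfl
    have hx2 : RFeval (x1 2) t = (p 2).eval t / (q 2).eval t := rfl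
    have hd0 : RFeval (RFderiv (x1 0)) t = ((Polynomial.derivative (p 0)).eval t * (q 0).eval t
        - (p 0).eval t * (Polynomial.derivative (q 0)).eval t) / ((q 0).eval t) ^ 2 :=
      RFeval_RFderiv (x1 0) t hb0
    have hd1 : RFeval (RFderiv (x1 1)) t = ((Polynomial.derivative (p 1)).eval t * (q 1).eval t
        - (p 1).eval t * (Polynomial.derivative (q 1)).eval t) / ((q 1).eval t) ^ 2 :=
      RFeval_RFderiv (x1 1) t hb1
    have hd2 : RFeval (RFderiv (x1 2)) t = ((Polynomial.derivative (p 2)).eval t * (q 2).eval t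
        - (p 2).eval t * (Polynomial.derivative (q 2)).eval t) / ((q 2).eval t) ^ 2 :=
      RFeval_RFderiv (x1 2) t hb2
    rw [hx0, hx1, hx2, hd0, hd1, hd2] at hWt
    show Polynomial.IsRoot _ t
    rw [Polynomial.IsRoot.def]
    have hQne : Polynomial.eval t (q 0) * Polynomial.eval t (q 1) * Polynomial.eval t (q 2) ≠ 0 :=
      mul_ne_zero (mul_ne_zero hb0 hb1) hb2
    apply mul_left_cancel₀ hQne
    rw [mul_zero]
    field_simp at hWt
    simp only [hAp, hBp, hQ, Polynomial.derivative_sub, Polynomial.derivative_add,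
      Polynomial.derivative_mul, Polynomial.derivative_C, Polynomial.eval_mul,
      Polynomial.eval_add, Polynomial.eval_sub, Polynomial.eval_C, Polynomial.eval_zero,
      zero_mul, zero_add, add_zero, mul_zero]
    linear_combination hWt
  obtain ⟨α, β, hab, hlin⟩ := wronskian_dep Ap Bp hWpol
  refine ⟨α * e 0 + β * g 0, α * e 1 + β * g 1, α * e 2 + β * g 2,
    -(α * (e 0 * P0 0 + e 1 * P0 1 + e 2 * P0 2) + β * (g 0 * P0 0 + g 1 * P0 1 + g 2 * P0 2)),
    hind α β hab, ?_⟩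
  intro t ht
  have hb0 : (q 0).eval t ≠ 0 := ht 0
  have hb1 : (q 1).eval t ≠ 0 := ht 1
  have hb2 : (q 2).eval t ≠ 0 := ht 2
  have hev := congrArg (Polynomial.eval t) hlin
  simp only [hAp, hBp, hQ, Polynomial.eval_mul, Polynomial.eval_add, Polynomial.eval_sub,
    Polynomial.eval_C, Polynomial.eval_zero] at hev
  have hx0 : RFeval (x1 0) t = (p 0).eval t / (q 0).eval t := rfl
  have hx1 : RFeval (x1 1) t = (p 1).eval t / (q 1).eval t := rfl
  have hx2 : RFeval (x1 2) t = (p 2).eval t / (q 2).eval t := rfl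
  rw [hx0, hx1, hx2]
  field_simp
  linear_combination hev

/-- Let `x1(t)` be a rational parametrization of a space curve `C1`,
let `(x0,y0,z0) = p0 ∈ ℝ³` and let `(u0,v0,w0) = v0 ∈ ℝ³ ∖ {0}`.  If the determinant
of the matrix with rows `x1(t) − p0`, `x1'(t)`, `v0` vanishes identically as a rational
function of `t`, then `C1` is contained in a plane: there exist `a,b,c,d ∈ ℝ` with
`(a,b,c) ≠ (0,0,0)` such that `a·x1(t) + b·y1(t) + c·z1(t) + d = 0` identically. -/
theorem statement_12 (x1 : Fin 3 → RatFunc ℝ) (p0 v0 : Fin 3 → ℝ)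
    (hv0 : v0 ≠ 0)
    (hdet : ∀ t : ℝ, DomR x1 t →
      Matrix.det (Matrix.of ![fun i => RFeval (x1 i) t - p0 i,
                              fun i => RFeval (RFderiv (x1 i)) t,
                              fun i => v0 i]) = 0) :
    ∃ a b c d : ℝ, ¬ (a = 0 ∧ b = 0 ∧ c = 0) ∧
      ∀ t : ℝ, DomR x1 t →
        a * RFeval (x1 0) t + b * RFeval (x1 1) t + c * RFeval (x1 2) t + d = 0 := by
  have hk : v0 0 ≠ 0 ∨ v0 1 ≠ 0 ∨ v0 2 ≠ 0 := by
    by_contra hk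
    push_neg at hk
    apply hv0
    funext i
    fin_cases i <;> simp [hk.1, hk.2.1, hk.2.2]
  have hdet' : ∀ t : ℝ, DomR x1 t →
      (RFeval (x1 0) t - p0 0) * RFeval (RFderiv (x1 1)) t * v0 2 -
              (RFeval (x1 0) t - p0 0) * RFeval (RFderiv (x1 2)) t * v0 1 -
            (RFeval (x1 1) t - p0 1) * RFeval (RFderiv (x1 0)) t * v0 2 +
          (RFeval (x1 1) t - p0 1) * RFeval (RFderiv (x1 2)) t * v0 0 +
        (RFeval (x1 2) t - p0 2) * RFeval (RFderiv (x1 0)) t * v0 1 -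
      (RFeval (x1 2) t - p0 2) * RFeval (RFderiv (x1 1)) t * v0 0 = 0 := by
    intro t ht
    have h := hdet t ht
    rw [Matrix.det_fin_three] at h
    simpa [Matrix.of_apply] using h
  rcases hk with hk | hk | hk
  · apply master x1 p0 ![v0 1, -(v0 0), 0] ![v0 2, 0, -(v0 0)]
    · intro t ht
      have h := hdet' t ht
      simp only [Matrix.cons_val_zero, Matrix.cons_val_one, Matrix.head_cons,
        Matrix.cons_val_two, Matrix.tail_cons]
      linear_combination v0 0 * h
    · intro α β hne hz
      simp only [Matrix.cons_val_zero, Matrix.cons_val_one, Matrix.head_cons,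
        Matrix.cons_val_two, Matrix.tail_cons] at hz
      apply hne
      exact ⟨(mul_eq_zero.mp (show α * v0 0 = 0 by linear_combination -hz.2.1)).resolve_right hk,
        (mul_eq_zero.mp (show β * v0 0 = 0 by linear_combination -hz.2.2)).resolve_right hk⟩
  · apply master x1 p0 ![v0 1, -(v0 0), 0] ![0, v0 2, -(v0 1)]
    · intro t ht
      have h := hdet' t ht
      simp only [Matrix.cons_val_zero, Matrix.cons_val_one, Matrix.head_cons,
        Matrix.cons_val_two, Matrix.tail_cons]
      linear_combination v0 1 * h
    · intro α β hne hz
      simp only [Matrix.cons_val_zero, Matrix.cons_val_one, Matrix.head_cons,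
        Matrix.cons_val_two, Matrix.tail_cons] at hz
      apply hne
      exact ⟨(mul_eq_zero.mp (show α * v0 1 = 0 by linear_combination hz.1)).resolve_right hk,
        (mul_eq_zero.mp (show β * v0 1 = 0 by linear_combination -hz.2.2)).resolve_right hk⟩
  · apply master x1 p0 ![v0 2, 0, -(v0 0)] ![0, v0 2, -(v0 1)]
    · intro t ht
      have h := hdet' t ht
      simp only [Matrix.cons_val_zero, Matrix.cons_val_one, Matrix.head_cons,
        Matrix.cons_val_two, Matrix.tail_cons]
      linear_combination v0 2 * h
    · intro α β hne hz
      simp only [Matrix.cons_val_zero, Matrix.cons_val_one, Matrix.head_cons,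
        Matrix.cons_val_two, Matrix.tail_cons] at hz
      apply hne
      exact ⟨(mul_eq_zero.mp (show α * v0 2 = 0 by linear_combination hz.1)).resolve_right hk,
        (mul_eq_zero.mp (show β * v0 2 = 0 by linear_combination hz.2.1)).resolve_right hk⟩

end
end
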